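/- arXiv:2504.02258 — 6 statements merged into one kernel-verified Lean document; each statement's English description precedes it below -/
import Mathlib

section
/- For all integers m,n ≥ 1 and any constant c > (m! n!)/(m^m n^n), every matrix Y ∈ ℝ^{m×n} is multiplicatively c-Dirichlet improvable: there exists T_c > 1 such that for every T ≥ T_c there exist p ∈ ℤ^m and q ∈ ℤ^n \ {0} with ∏_{i=1}^m |Y_i q − p_i| < c/T and ∏_{j=1}^n max{1, |q_j|} < T. -/
open scoped BigOperators

open MeasureTheory ENNReal Submodule



lemma amgm_aux {k : ℕ} (hk : k ≠ 0) (z : Fin k → ℝ) (hz : ∀ i, 0 ≤ z i) :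
    ∏ i, z i ≤ ((∑ i, z i) / k) ^ k := by
  have hk' : (0:ℝ) < k := by positivity
  have hGM := Real.geom_mean_le_arith_mean_weighted Finset.univ (fun _ => (k:ℝ)⁻¹) z
    (fun _ _ => by positivity)
    (by simp [Finset.sum_const, mul_inv_cancel₀ hk'.ne'])
    (fun i _ => hz i)
  have h1 : ∏ i, z i = (∏ i, z i ^ ((k:ℝ)⁻¹)) ^ k := by
    rw [← Finset.prod_pow]
    refine Finset.prod_congr rfl fun i _ => ?_
    rw [← Real.rpow_natCast (z i ^ ((k:ℝ)⁻¹)) k, ← Real.rpow_mul (hz i),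
      inv_mul_cancel₀ (by exact_mod_cast hk'.ne'), Real.rpow_one]
  rw [h1]
  refine pow_le_pow_left₀ (Finset.prod_nonneg fun i _ => Real.rpow_nonneg (hz i) _) ?_ k
  calc ∏ i, z i ^ ((k:ℝ)⁻¹) ≤ ∑ i, (k:ℝ)⁻¹ * z i := hGM
    _ = (∑ i, z i) / k := by rw [← Finset.mul_sum]; ring

lemma vol_l1_ball {k : ℕ} (hk : k ≠ 0) (r : ℝ) :
    volume {x : Fin k → ℝ | ∑ i, |x i| ≤ r} =
      ENNReal.ofReal r ^ k * ENNReal.ofReal (2 ^ k / k.factorial) := by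
  have : Nonempty (Fin k) := ⟨⟨0, Nat.pos_of_ne_zero hk⟩⟩
  have h := MeasureTheory.volume_sum_rpow_le (Fin k) (p := 1) le_rfl r
  simp only [Real.rpow_one, div_one, Fintype.card_fin] at h
  rw [show ((1:ℝ) + 1) = 2 by norm_num, Real.Gamma_two] at h
  rw [show ((k:ℝ) + 1) = (k:ℕ) + 1 by push_cast; ring, Real.Gamma_nat_eq_factorial] at h
  simpa [mul_one] using h


lemma minkowski_l1 (m n : ℕ) (hm : m ≠ 0) (hn : n ≠ 0) (Y : Fin m → Fin n → ℝ)
    (a b : ℝ) (ha : 0 < a) (hb : 0 < b)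
    (hvol : ((m.factorial : ℝ) * n.factorial) < a ^ m * b ^ n) :
    ∃ (p : Fin m → ℤ) (q : Fin n → ℤ), ¬(p = 0 ∧ q = 0) ∧
      (∑ i, |(∑ j, Y i j * (q j : ℝ)) - (p i : ℝ)|) ≤ a ∧
      (∑ j, |(q j : ℝ)|) ≤ b := by
  classical
  set ι := Fin m ⊕ Fin n
  set bas := Pi.basisFun ℝ ι with hbas
  -- the convex body
  set s : Set (ι → ℝ) := {v | (∑ i, |(∑ j, Y i j * v (Sum.inr j)) - v (Sum.inl i)|) ≤ a ∧
      (∑ j, |v (Sum.inr j)|) ≤ b} with hs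
  -- the fundamental domain has volume 1
  have fund := ZSpan.isAddFundamentalDomain' bas (volume : Measure (ι → ℝ))
  have hF : volume (ZSpan.fundamentalDomain bas) = 1 := by
    rw [hbas, ZSpan.fundamentalDomain_pi_basisFun, volume_pi_pi]
    simp [Real.volume_Ico]
  -- the shear linear map
  set M : Matrix ι ι ℝ := Matrix.fromBlocks (-1) (Matrix.of Y) 0 1 with hM
  set f : (ι → ℝ) →ₗ[ℝ] (ι → ℝ) := Matrix.toLin' M with hf
  have hdet : LinearMap.det f = (-1 : ℝ) ^ m := by
    rw [hf, LinearMap.det_toLin', hM, Matrix.det_fromBlocks_zero₂₁, Matrix.det_one, mul_one,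
      show (-1 : Matrix (Fin m) (Fin m) ℝ) = -(1) by ring, Matrix.det_neg]
    simp
  have hdet_ne : LinearMap.det f ≠ 0 := by
    rw [hdet]; exact pow_ne_zero _ (by norm_num)
  have hfapp : ∀ (v : ι → ℝ),
      (∀ i, f v (Sum.inl i) = (∑ j, Y i j * v (Sum.inr j)) - v (Sum.inl i)) ∧
      (∀ j, f v (Sum.inr j) = v (Sum.inr j)) := by
    intro v
    constructor
    · intro i
      simp only [hf, Matrix.toLin'_apply, Matrix.mulVec, dotProduct, hM]
      rw [Fintype.sum_sum_type]
      simp only [Matrix.fromBlocks_apply₁₁, Matrix.fromBlocks_apply₁₂, Matrix.of_apply, Matrix.neg_apply,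
        Matrix.one_apply]
      rw [sub_eq_add_neg, add_comm]
      congr 1
      · simp [ite_mul, Finset.sum_ite_eq']
    · intro j
      simp only [hf, Matrix.toLin'_apply, Matrix.mulVec, dotProduct, hM]
      rw [Fintype.sum_sum_type]
      simp only [Matrix.fromBlocks_apply₂₁, Matrix.fromBlocks_apply₂₂, Matrix.zero_apply,
        Matrix.one_apply, zero_mul, Finset.sum_const_zero, zero_add, ite_mul, one_mul]
      simp [Finset.sum_ite_eq']
  -- s is the preimage under f of a product of two l1 balls
  set A : Set (Fin m → ℝ) := {x | ∑ i, |x i| ≤ a} with hA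
  set B : Set (Fin n → ℝ) := {x | ∑ j, |x j| ≤ b} with hB
  have hclosedA : IsClosed A := by
    have : Continuous fun x : Fin m → ℝ => ∑ i, |x i| := by
      exact continuous_finset_sum _ fun i _ => (continuous_apply i).abs
    exact isClosed_le this continuous_const
  have hclosedB : IsClosed B := by
    have : Continuous fun x : Fin n → ℝ => ∑ j, |x j| := by
      exact continuous_finset_sum _ fun j _ => (continuous_apply j).abs
    exact isClosed_le this continuous_const
  set e := MeasurableEquiv.sumPiEquivProdPi (fun _ : ι => ℝ) with he
  have hsf : s = f ⁻¹' (e ⁻¹' (A ×ˢ B)) := by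
    ext v
    obtain ⟨h1, h2⟩ := hfapp v
    simp only [hs, Set.mem_setOf_eq, Set.mem_preimage, Set.mem_prod, he,
      MeasurableEquiv.coe_sumPiEquivProdPi, Equiv.sumPiEquivProdPi_apply, hA, hB,
      Set.mem_setOf_eq]
    constructor
    · rintro ⟨hx, hy⟩
      exact ⟨by simpa [h1] using hx, by simpa [h2] using hy⟩
    · rintro ⟨hx, hy⟩
      exact ⟨by simpa [h1] using hx, by simpa [h2] using hy⟩
  have hABmeas : MeasurableSet (A ×ˢ B) :=
    (hclosedA.measurableSet).prod (hclosedB.measurableSet)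
  have hvolAB : volume (e ⁻¹' (A ×ˢ B)) = volume A * volume B := by
    rw [(volume_measurePreserving_sumPiEquivProdPi (fun _ : ι => ℝ)).measure_preimage
      hABmeas.nullMeasurableSet, Measure.volume_eq_prod, Measure.prod_prod]
  have hvols : volume s = ENNReal.ofReal (a ^ m * b ^ n * (2 ^ (m + n) / (m.factorial * n.factorial))) := by
    rw [hsf, Measure.addHaar_preimage_linearMap volume hdet_ne, hvolAB,
      vol_l1_ball hm a, vol_l1_ball hn b, hdet]
    rw [show |(((-1:ℝ)^m))⁻¹| = 1 by
      rw [abs_inv, abs_pow, abs_neg, abs_one, one_pow, inv_one], ENNReal.ofReal_one, one_mul]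
    rw [← ENNReal.ofReal_pow ha.le, ← ENNReal.ofReal_pow hb.le]
    rw [← ENNReal.ofReal_mul (by positivity), ← ENNReal.ofReal_mul (by positivity),
      ← ENNReal.ofReal_mul (by positivity)]
    congr 1
    rw [pow_add]
    field_simp
  -- apply Minkowski
  have hfinrank : Module.finrank ℝ (ι → ℝ) = m + n := by
    rw [Module.finrank_fintype_fun_eq_card, Fintype.card_sum, Fintype.card_fin, Fintype.card_fin]
  have hsymm : ∀ x ∈ s, -x ∈ s := by
    intro x hx
    obtain ⟨h1, h2⟩ := hx
    constructor
    · refine le_trans (le_of_eq ?_) h1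
      refine Finset.sum_congr rfl fun i _ => ?_
      rw [← abs_neg]
      congr 1
      simp
      ring
    · refine le_trans (le_of_eq ?_) h2
      refine Finset.sum_congr rfl fun j _ => ?_
      simp
  have hconv : Convex ℝ s := by
    rintro x hx y hy α β hα hβ hαβ
    obtain ⟨hx1, hx2⟩ := hx
    obtain ⟨hy1, hy2⟩ := hy
    constructor
    · calc ∑ i, |(∑ j, Y i j * (α • x + β • y) (Sum.inr j)) - (α • x + β • y) (Sum.inl i)|
          = ∑ i, |α * ((∑ j, Y i j * x (Sum.inr j)) - x (Sum.inl i))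
              + β * ((∑ j, Y i j * y (Sum.inr j)) - y (Sum.inl i))| := by
            refine Finset.sum_congr rfl fun i _ => ?_
            congr 1
            simp only [Pi.add_apply, Pi.smul_apply, smul_eq_mul]
            have hsum : ∑ j, Y i j * (α * x (Sum.inr j) + β * y (Sum.inr j))
                = α * (∑ j, Y i j * x (Sum.inr j)) + β * (∑ j, Y i j * y (Sum.inr j)) := by
              rw [Finset.mul_sum, Finset.mul_sum, ← Finset.sum_add_distrib]
              exact Finset.sum_congr rfl fun j _ => by ring
            rw [hsum]
            ring
        _ ≤ ∑ i, (α * |(∑ j, Y i j * x (Sum.inr j)) - x (Sum.inl i)|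
              + β * |(∑ j, Y i j * y (Sum.inr j)) - y (Sum.inl i)|) := by
            refine Finset.sum_le_sum fun i _ => ?_
            refine le_trans (abs_add_le _ _) ?_
            rw [abs_mul, abs_mul, abs_of_nonneg hα, abs_of_nonneg hβ]
        _ = α * (∑ i, |(∑ j, Y i j * x (Sum.inr j)) - x (Sum.inl i)|)
              + β * (∑ i, |(∑ j, Y i j * y (Sum.inr j)) - y (Sum.inl i)|) := by
            rw [Finset.sum_add_distrib, Finset.mul_sum, Finset.mul_sum]
        _ ≤ α * a + β * a := by
            gcongr
        _ = a := by rw [← add_mul, hαβ, one_mul]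
    · calc ∑ j, |(α • x + β • y) (Sum.inr j)|
          = ∑ j, |α * x (Sum.inr j) + β * y (Sum.inr j)| := by
            refine Finset.sum_congr rfl fun j _ => rfl
        _ ≤ ∑ j, (α * |x (Sum.inr j)| + β * |y (Sum.inr j)|) := by
            refine Finset.sum_le_sum fun j _ => ?_
            refine le_trans (abs_add_le _ _) ?_
            rw [abs_mul, abs_mul, abs_of_nonneg hα, abs_of_nonneg hβ]
        _ = α * (∑ j, |x (Sum.inr j)|) + β * (∑ j, |y (Sum.inr j)|) := by
            rw [Finset.sum_add_distrib, Finset.mul_sum, Finset.mul_sum]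
        _ ≤ α * b + β * b := by gcongr
        _ = b := by rw [← add_mul, hαβ, one_mul]
  have hmeas_lt : volume (ZSpan.fundamentalDomain bas) * 2 ^ Module.finrank ℝ (ι → ℝ) < volume s := by
    rw [hF, one_mul, hvols, hfinrank]
    have h2 : ((2:ℝ≥0∞) ^ (m+n)) = ENNReal.ofReal ((2:ℝ) ^ (m+n)) := by
      rw [ENNReal.ofReal_pow (by norm_num)]
      norm_num
    rw [h2]
    rw [ENNReal.ofReal_lt_ofReal_iff (by positivity)]
    have hfacpos : (0:ℝ) < m.factorial * n.factorial := by positivity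
    have h2pos : (0:ℝ) < 2 ^ (m+n) := by positivity
    rw [show a ^ m * b ^ n * (2 ^ (m + n) / ((m.factorial : ℝ) * n.factorial))
        = (a ^ m * b ^ n / (m.factorial * n.factorial)) * 2 ^ (m+n) by ring]
    nth_rewrite 1 [← one_mul ((2:ℝ) ^ (m+n))]
    exact mul_lt_mul_of_pos_right ((one_lt_div hfacpos).mpr hvol) h2pos
  haveI : Countable (span ℤ (Set.range ⇑bas)).toAddSubgroup :=
    (inferInstance : Countable (span ℤ (Set.range ⇑bas)))
  obtain ⟨x, hx0, hxs⟩ := exists_ne_zero_mem_lattice_of_measure_mul_two_pow_lt_measure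
    fund hsymm hconv hmeas_lt
  -- extract integer coordinates
  have hint : ∀ k : ι, ∃ z : ℤ, ((z : ℝ)) = (x : ι → ℝ) k := by
    intro k
    have := ((Pi.basisFun ℝ ι).mem_span_iff_repr_mem ℤ (x : ι → ℝ)).mp (by
      have := x.2
      simpa [hbas] using this) k
    obtain ⟨z, hz⟩ := this
    exact ⟨z, by simpa [Pi.basisFun_repr] using hz⟩
  choose z hz using hint
  refine ⟨fun i => z (Sum.inl i), fun j => z (Sum.inr j), ?_, ?_, ?_⟩
  · rintro ⟨hp, hq⟩
    apply hx0
    have : (x : ι → ℝ) = 0 := by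
      funext k
      cases k with
      | inl i => rw [← hz (Sum.inl i)]; have := congrFun hp i; simp at this; simp [this]
      | inr j => rw [← hz (Sum.inr j)]; have := congrFun hq j; simp at this; simp [this]
    ext
    exact congrFun this _
  · have := hxs.1
    refine le_trans (le_of_eq ?_) this
    refine Finset.sum_congr rfl fun i _ => ?_
    rw [hz (Sum.inl i)]
    congr 1
    refine congrArg₂ _ (Finset.sum_congr rfl fun j _ => ?_) rfl
    rw [hz (Sum.inr j)]
  · have := hxs.2
    refine le_trans (le_of_eq ?_) this
    refine Finset.sum_congr rfl fun j _ => ?_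
    rw [hz (Sum.inr j)]

/-- Proposition: for `c > m! n! / (m^m n^n)` every real `m × n` matrix `Y` is
multiplicatively `c`-Dirichlet improvable. -/
theorem multiplicative_dirichlet_improvable
    (m n : ℕ) (hm : 1 ≤ m) (hn : 1 ≤ n) (Y : Fin m → Fin n → ℝ) (c : ℝ)
    (hc : ((m.factorial : ℝ) * (n.factorial : ℝ)) / ((m : ℝ) ^ m * (n : ℝ) ^ n) < c) :
    ∃ Tc : ℝ, 1 < Tc ∧ ∀ T : ℝ, Tc ≤ T →
      ∃ (p : Fin m → ℤ) (q : Fin n → ℤ), q ≠ 0 ∧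
        (∏ i, |(∑ j, Y i j * (q j : ℝ)) - (p i : ℝ)|) < c / T ∧
        (∏ j, max 1 |(q j : ℝ)|) < T := by
  have hm0 : m ≠ 0 := by omega
  have hn0 : n ≠ 0 := by omega
  have hmn : (0:ℝ) < (m:ℝ)^m * (n:ℝ)^n := by positivity
  set B : ℝ := ((m.factorial : ℝ) * (n.factorial : ℝ)) / ((m : ℝ) ^ m * (n : ℝ) ^ n) with hBdef
  have hBpos : 0 < B := by positivity
  set c' : ℝ := (B + c)/2 with hc'def
  have hBc' : B < c' := by simp only [hc'def]; linarith
  have hc'c : c' < c := by simp only [hc'def]; linarith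
  have hc'pos : 0 < c' := lt_trans hBpos hBc'
  set θ : ℝ := (B + c')/(2*c') with hθdef
  have hθpos : 0 < θ := by positivity
  have hθlt1 : θ < 1 := by
    rw [hθdef, div_lt_one (by positivity)]; linarith
  have hθhalf : 1/2 < θ := by
    rw [hθdef, lt_div_iff₀ (by positivity)]; nlinarith
  have hc'θ : B < c' * θ := by
    have : c' * θ = (B + c')/2 := by rw [hθdef]; field_simp
    rw [this]; linarith
  set Kn : ℝ := ((n:ℝ)^n)^(n-1) with hKndef
  have hKnpos : 0 < Kn := by positivity
  refine ⟨max (max (c' * m^m + 1) (Kn + 1)) 2, lt_of_lt_of_le one_lt_two (le_max_right _ _), ?_⟩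
  intro T hT
  have hT2 : (2:ℝ) ≤ T := le_trans (le_max_right _ _) hT
  have hT0 : (0:ℝ) < T := by linarith
  have hTm : c' * m^m < T := by
    have := le_trans (le_trans (le_max_left _ _) (le_max_left _ _)) hT; linarith
  have hTK : Kn < T := by
    have := le_trans (le_trans (le_max_right _ _) (le_max_left _ _)) hT; linarith
  set a : ℝ := m * (c'/T)^((m:ℝ)⁻¹) with hadef
  set b : ℝ := n * (θ*T)^((n:ℝ)⁻¹) with hbdef
  have hcT : 0 < c'/T := by positivity
  have hθT : 0 < θ*T := by positivity
  have ha : 0 < a := by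
    rw [hadef]
    have := Real.rpow_pos_of_pos hcT ((m:ℝ)⁻¹)
    positivity
  have hb : 0 < b := by
    rw [hbdef]
    have := Real.rpow_pos_of_pos hθT ((n:ℝ)⁻¹)
    positivity
  have ham : a^m = m^m * (c'/T) := by
    rw [hadef, mul_pow, Real.rpow_inv_natCast_pow hcT.le hm0]
  have hbn : b^n = n^n * (θ*T) := by
    rw [hbdef, mul_pow, Real.rpow_inv_natCast_pow hθT.le hn0]
  have hvol : ((m.factorial : ℝ) * n.factorial) < a ^ m * b ^ n := by
    have h1 : (m.factorial * n.factorial : ℝ) = B * ((m:ℝ)^m*(n:ℝ)^n) := by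
      rw [hBdef]; field_simp
    have h2 : a^m*b^n = (c' * θ) * ((m:ℝ)^m*(n:ℝ)^n) := by
      rw [ham, hbn]; field_simp
    rw [h1, h2]
    exact mul_lt_mul_of_pos_right hc'θ hmn
  obtain ⟨p, q, hpq, h1, h2⟩ := minkowski_l1 m n hm0 hn0 Y a b ha hb hvol
  have ha1 : a < 1 := by
    by_contra h
    push_neg at h
    have h1a : (1:ℝ) ≤ a^m := one_le_pow₀ h
    rw [ham] at h1a
    have : (m:ℝ)^m * (c'/T) = (c' * m^m)/T := by ring
    rw [this] at h1a
    have h2a : (c' * (m:ℝ)^m)/T < 1 := (div_lt_one hT0).mpr hTm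
    linarith
  have hq0 : q ≠ 0 := by
    intro hq
    apply hpq
    have hsum : ∑ i, |(p i : ℝ)| ≤ a := by
      have : ∀ i, |(∑ j, Y i j * ((q j : ℝ))) - (p i : ℝ)| = |(p i : ℝ)| := by
        intro i
        rw [hq]
        simp
      rwa [Finset.sum_congr rfl fun i _ => this i] at h1
    have hp0 : p = 0 := by
      funext i
      have hle : |(p i : ℝ)| ≤ a :=
        le_trans (Finset.single_le_sum (fun i _ => abs_nonneg ((p i : ℝ))) (Finset.mem_univ i)) hsum
      have : |(p i : ℝ)| < 1 := lt_of_le_of_lt hle ha1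
      have : |p i| < 1 := by exact_mod_cast (by rwa [← Int.cast_abs] at this : ((|p i| : ℤ) : ℝ) < 1)
      simpa using Int.abs_lt_one_iff.mp this
    exact ⟨hp0, hq⟩
  refine ⟨p, q, hq0, ?_, ?_⟩
  · -- first product
    have hAM : ∏ i, |(∑ j, Y i j * (q j : ℝ)) - (p i : ℝ)|
        ≤ ((∑ i, |(∑ j, Y i j * (q j : ℝ)) - (p i : ℝ)|)/m)^m :=
      amgm_aux hm0 _ (fun i => abs_nonneg _)
    have hstep : ((∑ i, |(∑ j, Y i j * (q j : ℝ)) - (p i : ℝ)|)/m)^m ≤ (a/m)^m := by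
      have hdiv : (∑ i, |(∑ j, Y i j * (q j : ℝ)) - (p i : ℝ)|)/(m:ℝ) ≤ a/(m:ℝ) := by gcongr
      exact pow_le_pow_left₀ (by positivity) hdiv m
    have ham' : (a/m)^m = c'/T := by
      rw [hadef, mul_comm, mul_div_assoc, div_self (by positivity : (m:ℝ) ≠ 0), mul_one,
        Real.rpow_inv_natCast_pow hcT.le hm0]
    have : c'/T < c/T := by gcongr
    calc ∏ i, |(∑ j, Y i j * (q j : ℝ)) - (p i : ℝ)| ≤ (a/m)^m := le_trans hAM hstep
      _ = c'/T := ham'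
      _ < c/T := this
  · -- second product
    by_cases hall : ∀ j, q j ≠ 0
    · have heq : ∀ j, max 1 |(q j:ℝ)| = |(q j:ℝ)| := by
        intro j
        refine max_eq_right ?_
        exact_mod_cast Int.one_le_abs (by exact hall j)
      rw [Finset.prod_congr rfl fun j _ => heq j]
      have hAM : ∏ j, |(q j : ℝ)| ≤ ((∑ j, |(q j : ℝ)|)/n)^n :=
        amgm_aux hn0 _ (fun j => abs_nonneg _)
      have hstep : ((∑ j, |(q j : ℝ)|)/n)^n ≤ (b/n)^n := by
        have hdiv : (∑ j, |(q j : ℝ)|)/(n:ℝ) ≤ b/(n:ℝ) := by gcongr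
        exact pow_le_pow_left₀ (by positivity) hdiv n
      have hbn' : (b/n)^n = θ*T := by
        rw [hbdef, mul_comm, mul_div_assoc, div_self (by positivity : (n:ℝ) ≠ 0), mul_one,
          Real.rpow_inv_natCast_pow hθT.le hn0]
      calc ∏ j, |(q j : ℝ)| ≤ (b/n)^n := le_trans hAM hstep
        _ = θ*T := hbn'
        _ < T := mul_lt_of_lt_one_left hT0 hθlt1
    · push_neg at hall
      obtain ⟨j₀, hj₀⟩ := hall
      have hb1 : 1 ≤ b := by
        have h1' : (1:ℝ) ≤ θ*T := by
          calc (1:ℝ) = (1/2)*2 := by norm_num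
            _ ≤ θ*T := mul_le_mul hθhalf.le hT2 (by norm_num) hθpos.le
        have : (1:ℝ) ≤ (θ*T)^((n:ℝ)⁻¹) := by
          rw [show (1:ℝ) = 1^((n:ℝ)⁻¹) from (Real.one_rpow _).symm]
          exact Real.rpow_le_rpow zero_le_one h1' (by positivity)
        calc (1:ℝ) ≤ (θ*T)^((n:ℝ)⁻¹) := this
          _ ≤ n * (θ*T)^((n:ℝ)⁻¹) := by
            nth_rewrite 1 [← one_mul ((θ*T)^((n:ℝ)⁻¹))]
            gcongr
            exact_mod_cast hn
          _ = b := rfl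
      have hprod : ∏ j, max 1 |(q j : ℝ)| = ∏ j ∈ Finset.univ.erase j₀, max 1 |(q j : ℝ)| := by
        rw [← Finset.mul_prod_erase Finset.univ _ (Finset.mem_univ j₀), hj₀]
        simp
      have hfac : ∀ j, max 1 |(q j : ℝ)| ≤ b := by
        intro j
        refine max_le hb1 ?_
        exact le_trans (Finset.single_le_sum (fun j _ => abs_nonneg ((q j : ℝ)))
          (Finset.mem_univ j)) h2
      have hcard : (Finset.univ.erase j₀).card = n - 1 := by
        rw [Finset.card_erase_of_mem (Finset.mem_univ j₀), Finset.card_univ, Fintype.card_fin]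
      have hle : ∏ j ∈ Finset.univ.erase j₀, max 1 |(q j : ℝ)| ≤ b^(n-1) := by
        rw [← hcard, ← Finset.prod_const]
        exact Finset.prod_le_prod (fun j _ => le_trans zero_le_one (le_max_left _ _))
          (fun j _ => hfac j)
      have hbT : b^(n-1) < T := by
        have hkey : (b^(n-1))^n < T^n := by
          have e1 : (b^(n-1))^n = (b^n)^(n-1) := by
            rw [← pow_mul, ← pow_mul, Nat.mul_comm]
          rw [e1, hbn, mul_pow]
          have e2 : (θ*T)^(n-1) ≤ T^(n-1) := by
            exact pow_le_pow_left₀ hθT.le (le_of_lt (mul_lt_of_lt_one_left hT0 hθlt1)) _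
          calc ((n:ℝ)^n)^(n-1) * (θ*T)^(n-1) ≤ ((n:ℝ)^n)^(n-1) * T^(n-1) := by
                apply mul_le_mul_of_nonneg_left e2 (by positivity)
            _ < T * T^(n-1) := by
                apply mul_lt_mul_of_pos_right _ (by positivity)
                exact hTK
            _ = T^n := by
                rw [← pow_succ']
                congr 1
                omega
        exact lt_of_pow_lt_pow_left₀ n hT0.le hkey
      calc ∏ j, max 1 |(q j : ℝ)| = ∏ j ∈ Finset.univ.erase j₀, max 1 |(q j : ℝ)| := hprod
        _ ≤ b^(n-1) := hle
        _ < T := hbT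
end

section
/- Let R : [0,∞) → ℝ be a continuous function with R(0) ≥ 0 such that t ↦ t − nR(t) is strictly increasing and tends to ∞, and t ↦ t + mR(t) is non-decreasing. Then there exists a unique continuous non-increasing function ψ : [e^{−nR(0)}, ∞) → (0,1] such that ψ(e^{t − nR(t)}) = e^{−t − mR(t)} for all t ≥ 0. -/
/-- Converse direction of the Dani correspondence: a height function `R` satisfying the
monotonicity conditions determines a unique approximation function `ψ` on
`[e^(−nR(0)), ∞)`. -/
theorem dani_correspondence_converse
    (m n : ℕ) (R : ℝ → ℝ) (hR0 : 0 ≤ R 0)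
    (hRcont : ContinuousOn R (Set.Ici 0))
    (hincr : StrictMonoOn (fun t => t - n * R t) (Set.Ici 0))
    (htend : Filter.Tendsto (fun t => t - n * R t) Filter.atTop Filter.atTop)
    (hnondecr : MonotoneOn (fun t => t + m * R t) (Set.Ici 0)) :
    ∃ ψ : ℝ → ℝ,
      (ContinuousOn ψ (Set.Ici (Real.exp (-(n : ℝ) * R 0))) ∧
        AntitoneOn ψ (Set.Ici (Real.exp (-(n : ℝ) * R 0))) ∧
        (∀ x ∈ Set.Ici (Real.exp (-(n : ℝ) * R 0)), ψ x ∈ Set.Ioc (0 : ℝ) 1) ∧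
        ∀ t : ℝ, 0 ≤ t → ψ (Real.exp (t - n * R t)) = Real.exp (-t - m * R t)) ∧
      ∀ ψ' : ℝ → ℝ,
        (ContinuousOn ψ' (Set.Ici (Real.exp (-(n : ℝ) * R 0))) ∧
          AntitoneOn ψ' (Set.Ici (Real.exp (-(n : ℝ) * R 0))) ∧
          (∀ x ∈ Set.Ici (Real.exp (-(n : ℝ) * R 0)), ψ' x ∈ Set.Ioc (0 : ℝ) 1) ∧
          ∀ t : ℝ, 0 ≤ t → ψ' (Real.exp (t - n * R t)) = Real.exp (-t - m * R t)) →
        Set.EqOn ψ ψ' (Set.Ici (Real.exp (-(n : ℝ) * R 0))) := by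
  classical
  set F : ℝ → ℝ := fun t => t - n * R (max t 0) with hF
  have hF0 : F 0 = -(n : ℝ) * R 0 := by simp [hF]
  have hFeq : ∀ t, 0 ≤ t → F t = t - n * R t := by
    intro t ht; simp [hF, max_eq_left ht]
  have hFcont : Continuous F := by
    have h1 : Continuous fun t : ℝ => R (max t 0) :=
      hRcont.comp_continuous (continuous_id.max continuous_const)
        (fun t => Set.mem_Ici.2 (le_max_right _ _))
    exact continuous_id.sub (continuous_const.mul h1)
  have hFmono : StrictMono F := by
    intro s t hst
    rcases le_or_gt 0 s with hs | hs
    · have ht : (0:ℝ) ≤ t := hs.trans hst.le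
      rw [hFeq s hs, hFeq t ht]
      exact hincr hs ht hst
    · have hFs : F s = s - n * R 0 := by simp [hF, max_eq_right hs.le]
      rcases le_or_gt t 0 with ht | ht
      · have hFt : F t = t - n * R 0 := by simp [hF, max_eq_right ht]
        rw [hFs, hFt]; linarith
      · have h1 : F s < F 0 := by rw [hFs, hF0]; linarith
        have h2 : F 0 < F t := by
          rw [hF0, hFeq t ht.le]
          have := hincr (le_refl (0:ℝ)) ht.le ht
          simpa using this
        exact h1.trans h2
  have hFtop : Filter.Tendsto F Filter.atTop Filter.atTop := by
    refine htend.congr' ?_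
    filter_upwards [Filter.eventually_ge_atTop (0:ℝ)] with t ht
    exact (hFeq t ht).symm
  have hFbot : Filter.Tendsto F Filter.atBot Filter.atBot := by
    have h : Filter.Tendsto (fun t : ℝ => t - n * R 0) Filter.atBot Filter.atBot :=
      Filter.tendsto_atBot_add_const_right _ _ Filter.tendsto_id
    refine h.congr' ?_
    filter_upwards [Filter.eventually_le_atBot (0:ℝ)] with t ht
    simp [hF, max_eq_right ht]
  have hFsurj : Function.Surjective F := hFcont.surjective hFtop hFbot
  let e : ℝ ≃o ℝ := StrictMono.orderIsoOfSurjective F hFmono hFsurj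
  have he : ∀ t, e t = F t := fun t => rfl
  let g : ℝ → ℝ := fun s => e.symm s
  have hgF : ∀ t, g (F t) = t := fun t => e.symm_apply_apply t
  have hFg : ∀ s, F (g s) = s := fun s => e.apply_symm_apply s
  have hgmono : Monotone g := e.symm.monotone
  have hgcont : Continuous g := e.symm.continuous
  set S := Set.Ici (Real.exp (-(n : ℝ) * R 0)) with hS
  have hxpos : ∀ x ∈ S, (0:ℝ) < x := fun x hx => lt_of_lt_of_le (Real.exp_pos _) hx
  have hkey : ∀ x ∈ S, 0 ≤ g (Real.log x) := by
    intro x hx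
    have hlog : F 0 ≤ Real.log x := by
      rw [hF0]
      exact (Real.le_log_iff_exp_le (hxpos x hx)).2 hx
    have := hgmono hlog
    rwa [hgF 0] at this
  set ψ : ℝ → ℝ := fun x =>
    Real.exp (-(g (Real.log x) + m * R (g (Real.log x)))) with hψ
  have hgl : ContinuousOn (fun x => g (Real.log x)) S := by
    refine hgcont.comp_continuousOn (Real.continuousOn_log.mono ?_)
    intro x hx
    exact ne_of_gt (hxpos x hx)
  have hRgl : ContinuousOn (fun x => R (g (Real.log x))) S :=
    hRcont.comp hgl hkey
  have hψcont : ContinuousOn ψ S :=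
    Real.continuous_exp.comp_continuousOn
      ((hgl.add (continuousOn_const.mul hRgl)).neg)
  have hψanti : AntitoneOn ψ S := by
    intro x hx y hy hxy
    have hlog : Real.log x ≤ Real.log y :=
      Real.log_le_log (hxpos x hx) hxy
    have hg : g (Real.log x) ≤ g (Real.log y) := hgmono hlog
    have := hnondecr (hkey x hx) (hkey y hy) hg
    simp only [hψ]
    simp only at this
    exact Real.exp_le_exp.2 (by linarith)
  have hψmem : ∀ x ∈ S, ψ x ∈ Set.Ioc (0:ℝ) 1 := by
    intro x hx
    refine ⟨Real.exp_pos _, ?_⟩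
    have h0 : (0:ℝ) + m * R 0 ≤ g (Real.log x) + m * R (g (Real.log x)) :=
      by simpa using hnondecr (le_refl (0:ℝ)) (hkey x hx) (hkey x hx)
    have hm : (0:ℝ) ≤ m * R 0 := mul_nonneg (Nat.cast_nonneg m) hR0
    have : -(g (Real.log x) + m * R (g (Real.log x))) ≤ 0 := by linarith
    simpa [hψ] using Real.exp_le_one_iff.2 this
  have hψfe : ∀ t : ℝ, 0 ≤ t →
      ψ (Real.exp (t - n * R t)) = Real.exp (-t - m * R t) := by
    intro t ht
    have h1 : Real.log (Real.exp (t - n * R t)) = F t := by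
      rw [Real.log_exp, hFeq t ht]
    simp only [hψ, h1, hgF t]
    ring_nf
  refine ⟨ψ, ⟨hψcont, hψanti, hψmem, hψfe⟩, ?_⟩
  rintro ψ' ⟨-, -, -, hfe'⟩ x hx
  set t := g (Real.log x) with htdef
  have ht0 : 0 ≤ t := hkey x hx
  have hxeq : Real.exp (t - n * R t) = x := by
    rw [← hFeq t ht0, hFg (Real.log x)]
    exact Real.exp_log (hxpos x hx)
  calc ψ x = Real.exp (-t - m * R t) := by rw [← hxeq]; exact hψfe t ht0
    _ = ψ' x := by rw [← hxeq]; exact (hfe' t ht0).symm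
end

section
/- Let λ ≥ 0 and ψ_λ(x) = e^{−1} for x < e and ψ_λ(x) = x^{−1}(log x)^{−λ} for x ≥ e. Let R_λ be the function associated to ψ_λ via the Dani correspondence, and let t_λ be the unique t with t − nR_λ(t) = e. Then for all t ≥ t_λ, R_λ satisfies e^{−(m+n)R_λ(t)} = (t − nR_λ(t))^{−λ}; consequently 0 ≤ R_λ(t) = O(log t) and e^{−(m+n)R_λ(t)} is comparable (up to constants depending on m,n) to t^{−λ} as t → ∞. -/
/-- For `ψ_λ(x) = e⁻¹` for `x < e` and `ψ_λ(x) = x⁻¹ (log x)^(−λ)` for `x ≥ e`, the Dani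
function `R_λ` satisfies `e^{−(m+n)R_λ(t)} = (t − nR_λ(t))^{−λ}` for `t ≥ t_λ`; consequently
`0 ≤ R_λ(t) = O(log t)` and `e^{−(m+n)R_λ(t)}` is comparable to `t^{−λ}`. -/
theorem dani_correspondence_log_power
    (m n : ℕ) (hm : 1 ≤ m) (hn : 1 ≤ n) (lam : ℝ) (hlam : 0 ≤ lam)
    (ψ : ℝ → ℝ)
    (hψ1 : ∀ x : ℝ, x < Real.exp 1 → ψ x = Real.exp (-1))
    (hψ2 : ∀ x : ℝ, Real.exp 1 ≤ x → ψ x = x⁻¹ * Real.log x ^ (-lam))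
    (R : ℝ → ℝ)
    (hRcont : ContinuousOn R (Set.Ici 0))
    (hincr : StrictMonoOn (fun t => t - n * R t) (Set.Ici 0))
    (htend : Filter.Tendsto (fun t => t - n * R t) Filter.atTop Filter.atTop)
    (hnondecr : MonotoneOn (fun t => t + m * R t) (Set.Ici 0))
    (hcorr : ∀ t : ℝ, 0 ≤ t → ψ (Real.exp (t - n * R t)) = Real.exp (-t - m * R t))
    (tlam : ℝ) (htlam0 : 0 ≤ tlam) (htlam : tlam - n * R tlam = Real.exp 1) :
    (∀ t : ℝ, tlam ≤ t →
        Real.exp (-((m : ℝ) + n) * R t) = (t - n * R t) ^ (-lam)) ∧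
    (∃ C : ℝ, 0 < C ∧ ∃ t0 : ℝ, ∀ t : ℝ, t0 ≤ t →
        0 ≤ R t ∧ R t ≤ C * Real.log t) ∧
    (∃ c1 c2 : ℝ, 0 < c1 ∧ 0 < c2 ∧ ∃ t0 : ℝ, ∀ t : ℝ, t0 ≤ t →
        c1 * t ^ (-lam) ≤ Real.exp (-((m : ℝ) + n) * R t) ∧
        Real.exp (-((m : ℝ) + n) * R t) ≤ c2 * t ^ (-lam)) := by
  have hmn : (0:ℝ) < (m:ℝ) + n := by positivity
  have hn1 : (1:ℝ) ≤ (n:ℝ) := by exact_mod_cast hn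
  -- the key identity together with the lower bound on t - n R t
  have key : ∀ t : ℝ, tlam ≤ t →
      Real.exp (-((m:ℝ)+n) * R t) = (t - n * R t) ^ (-lam) ∧
      Real.exp 1 ≤ t - n * R t := by
    intro t ht
    have ht0 : (0:ℝ) ≤ t := le_trans htlam0 ht
    have hu : Real.exp 1 ≤ t - n * R t := by
      have := (hincr.monotoneOn) (Set.mem_Ici.2 htlam0) (Set.mem_Ici.2 ht0) ht
      simpa [htlam] using this
    have h1e : (1:ℝ) ≤ Real.exp 1 := by
      have := Real.add_one_le_exp (1:ℝ); linarith
    have hx : Real.exp 1 ≤ Real.exp (t - n * R t) :=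
      Real.exp_le_exp.2 (le_trans h1e hu)
    have h1 := hcorr t ht0
    rw [hψ2 _ hx, Real.log_exp, ← Real.exp_neg] at h1
    refine ⟨?_, hu⟩
    have h2 : Real.exp (-((m:ℝ)+n) * R t)
        = Real.exp (t - n * R t) * Real.exp (-t - m * R t) := by
      rw [← Real.exp_add]; ring_nf
    rw [h2, ← h1, ← mul_assoc, ← Real.exp_add]
    simp
  have key1 := fun t ht => (key t ht).1
  -- nonnegativity and logarithmic bound
  have hbound : ∀ t : ℝ, max tlam (Real.exp 1) ≤ t →
      0 ≤ R t ∧ ((m:ℝ)+n) * R t ≤ lam * Real.log t := by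
    intro t ht
    have ht1 : tlam ≤ t := le_trans (le_max_left _ _) ht
    have hte : Real.exp 1 ≤ t := le_trans (le_max_right _ _) ht
    have htpos : (0:ℝ) < t := lt_of_lt_of_le (Real.exp_pos 1) hte
    obtain ⟨heq, hu⟩ := key t ht1
    have hupos : (0:ℝ) < t - n * R t := lt_of_lt_of_le (Real.exp_pos 1) hu
    have h1e : (1:ℝ) ≤ Real.exp 1 := by
      have := Real.add_one_le_exp (1:ℝ); linarith
    -- R t ≥ 0
    have hR0 : 0 ≤ R t := by
      have hle1 : (t - n * R t) ^ (-lam) ≤ 1 :=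
        Real.rpow_le_one_of_one_le_of_nonpos (le_trans h1e hu) (by linarith)
      have : Real.exp (-((m:ℝ)+n) * R t) ≤ Real.exp 0 := by
        rw [Real.exp_zero]; rw [heq]; exact hle1
      have := Real.exp_le_exp.1 this
      nlinarith
    refine ⟨hR0, ?_⟩
    have hut : t - n * R t ≤ t := by nlinarith
    have hmono : t ^ (-lam) ≤ (t - n * R t) ^ (-lam) :=
      Real.rpow_le_rpow_of_nonpos hupos hut (by linarith)
    have htpow : t ^ (-lam) = Real.exp (-(lam * Real.log t)) := by
      rw [Real.rpow_def_of_pos htpos]; ring_nf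
    have : Real.exp (-(lam * Real.log t)) ≤ Real.exp (-((m:ℝ)+n) * R t) := by
      rw [heq, ← htpow]; exact hmono
    have := Real.exp_le_exp.1 this
    linarith
  refine ⟨key1, ⟨lam + 1, by linarith, max tlam (Real.exp 1), ?_⟩, ?_⟩
  · intro t ht
    obtain ⟨hR0, hRb⟩ := hbound t ht
    refine ⟨hR0, ?_⟩
    have hte : Real.exp 1 ≤ t := le_trans (le_max_right _ _) ht
    have hlog1 : (1:ℝ) ≤ Real.log t := by
      have := Real.log_le_log (Real.exp_pos 1) hte
      simpa using this
    nlinarith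
  · -- comparability
    have hev : ∀ᶠ t in Filter.atTop, lam * Real.log t ≤ t / 2 := by
      have h := (Real.isLittleO_log_id_atTop.const_mul_left lam).def
        (by norm_num : (0:ℝ) < 1/2)
      filter_upwards [h, Filter.eventually_ge_atTop (0:ℝ)] with t hb ht0
      have : lam * Real.log t ≤ |lam * Real.log t| := le_abs_self _
      calc lam * Real.log t ≤ ‖lam * Real.log t‖ := le_abs_self _
        _ ≤ 1/2 * ‖t‖ := hb
        _ = t / 2 := by rw [Real.norm_eq_abs, abs_of_nonneg ht0]; ring
    obtain ⟨t1, ht1⟩ := Filter.eventually_atTop.mp hev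
    refine ⟨1, 2 ^ lam, one_pos, Real.rpow_pos_of_pos two_pos lam,
      max (max tlam (Real.exp 1)) t1, ?_⟩
    intro t ht
    have htl : tlam ≤ t := le_trans (le_trans (le_max_left _ _) (le_max_left _ _)) ht
    have hte : Real.exp 1 ≤ t := le_trans (le_trans (le_max_right _ _) (le_max_left _ _)) ht
    have htt1 : t1 ≤ t := le_trans (le_max_right _ _) ht
    have htpos : (0:ℝ) < t := lt_of_lt_of_le (Real.exp_pos 1) hte
    obtain ⟨heq, hu⟩ := key t htl
    have hupos : (0:ℝ) < t - n * R t := lt_of_lt_of_le (Real.exp_pos 1) hu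
    obtain ⟨hR0, hRb⟩ := hbound t (max_le htl hte |> fun _ => le_trans (le_max_left _ _) ht)
    have hut : t - n * R t ≤ t := by nlinarith
    constructor
    · rw [heq, one_mul]
      exact Real.rpow_le_rpow_of_nonpos hupos hut (by linarith)
    · -- t - n R t ≥ t / 2
      have hnR : (n:ℝ) * R t ≤ lam * Real.log t := by
        have : (n:ℝ) * R t ≤ ((m:ℝ)+n) * R t := by
          have hm0 : (0:ℝ) ≤ (m:ℝ) := Nat.cast_nonneg m
          nlinarith
        linarith
      have hhalf : t / 2 ≤ t - n * R t := by
        have := ht1 t htt1; linarith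
      have h2pos : (0:ℝ) < t / 2 := by linarith
      have hle : (t - n * R t) ^ (-lam) ≤ (t / 2) ^ (-lam) :=
        Real.rpow_le_rpow_of_nonpos h2pos hhalf (by linarith)
      have hdiv : (t / 2) ^ (-lam) = 2 ^ lam * t ^ (-lam) := by
        rw [Real.div_rpow (le_of_lt htpos) (by norm_num : (0:ℝ) ≤ 2),
          div_eq_mul_inv, ← Real.rpow_neg (by norm_num : (0:ℝ) ≤ 2), neg_neg, mul_comm]
      rw [heq]
      calc (t - n * R t) ^ (-lam) ≤ (t / 2) ^ (-lam) := hle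
        _ = 2 ^ lam * t ^ (-lam) := hdiv
end

section
/- Transference, part (a): Let m,n ≥ 1, Y ∈ ℝ^{m×n}, 0 < c < 1, t > 0, and set R_c = (1/(m+n)) log(1/c). Suppose there exists a = (a_1,…,a_{m+n}) with Σ_{i≤m} a_i = t = −Σ_{j>m} a_j, a_i > −R_c for i ≤ m, a_{m+j} < −R_c for j ≤ n, such that δ(exp(a)·x_Y) < c^{1/(m+n)}. Then there exists a' with Σ_{i≤m} a'_i = t = −Σ_{j>m} a'_{m+j}, a'_i > 0 for i ≤ m, a'_{m+j} < 0 for j ≤ n, such that δ(exp(a')·x_Y) < c^{1/(m(m+n))}. -/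
open scoped BigOperators

/-- The lattice `x_Y = ((I_m, Y),(0,I_n))·ℤ^{m+n}`, viewed inside `ℝ^m × ℝ^n`. -/
def xYset (m n : ℕ) (Y : Fin m → Fin n → ℝ) : Set ((Fin m → ℝ) × (Fin n → ℝ)) :=
  {v | ∃ (p : Fin m → ℤ) (q : Fin n → ℤ),
    v.1 = (fun i => (p i : ℝ) + ∑ j, Y i j * (q j : ℝ)) ∧ v.2 = fun j => (q j : ℝ)}

/-- Action of the diagonal element `exp(a)` on subsets of `ℝ^m × ℝ^n`. -/
def diagAct {m n : ℕ} (a : Fin m → ℝ) (b : Fin n → ℝ)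
    (S : Set ((Fin m → ℝ) × (Fin n → ℝ))) : Set ((Fin m → ℝ) × (Fin n → ℝ)) :=
  (fun v : (Fin m → ℝ) × (Fin n → ℝ) =>
    ((fun i => Real.exp (a i) * v.1 i), fun j => Real.exp (b j) * v.2 j)) '' S

/-- `δ(S)`: shortest sup-norm length of a nonzero vector of `S`. -/
noncomputable def deltaSet {m n : ℕ} (S : Set ((Fin m → ℝ) × (Fin n → ℝ))) : ℝ :=
  sInf {x | ∃ v ∈ S, v ≠ 0 ∧ ‖v‖ = x}

section Dirichlet
open MeasureTheory
open scoped ENNReal NNReal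

variable {ι : Type} [Fintype ι]

/-- The involutive unimodular map used for Dirichlet's theorem. -/
noncomputable def dmap (x : ι → ℝ) : ((Unit ⊕ ι) → ℝ) →ₗ[ℝ] ((Unit ⊕ ι) → ℝ) where
  toFun y := Sum.elim (fun _ => y (.inl ())) (fun i => x i * y (.inl ()) - y (.inr i))
  map_add' y z := by funext s; cases s <;> simp <;> ring
  map_smul' c y := by funext s; cases s <;> simp <;> ring

lemma dmap_involutive (x : ι → ℝ) : Function.Involutive (dmap x) := by
  intro y; funext s; cases s <;> simp [dmap] <;> ring

lemma dmap_det_mul_self (x : ι → ℝ) :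
    LinearMap.det (dmap x) * LinearMap.det (dmap x) = 1 := by
  rw [← LinearMap.det_comp]
  have : (dmap x).comp (dmap x) = LinearMap.id := by
    apply LinearMap.ext; intro y; exact dmap_involutive x y
  rw [this, LinearMap.det_id]

lemma dirichlet_sim (x : ι → ℝ) (T ε : ℝ) (hε : 0 < ε) (hε1 : ε < 1)
    (hT : 1 < T * ε ^ (Fintype.card ι)) :
    ∃ (N : ℤ) (r : ι → ℤ), 1 ≤ N ∧ (N : ℝ) ≤ T ∧
      ∀ i, |(N : ℝ) * x i - (r i : ℝ)| ≤ ε := by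
  classical
  have hεk : (0:ℝ) < ε ^ (Fintype.card ι) := pow_pos hε _
  have hT0 : 0 < T := by nlinarith
  set E := (Unit ⊕ ι) → ℝ
  set f := dmap x with hf
  set cc : (Unit ⊕ ι) → ℝ := Sum.elim (fun _ => T) (fun _ => ε) with hcc
  set B : Set E := Set.pi Set.univ (fun s => Set.Icc (-(cc s)) (cc s)) with hB
  set S : Set E := f ⁻¹' B with hS
  have hdet := dmap_det_mul_self x
  have hdetne : LinearMap.det f ≠ 0 := by
    intro h; rw [hf] at *; rw [h, mul_zero] at hdet; norm_num at hdet
  have hccpos : ∀ s, 0 < cc s := by rintro (s | i) <;> simpa [hcc]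
  -- symmetry
  have h_symm : ∀ y ∈ S, -y ∈ S := by
    intro y hy
    simp only [hS, Set.mem_preimage, map_neg] at hy ⊢
    intro s hs
    have := hy s hs
    simp only [Set.mem_Icc, Pi.neg_apply] at this ⊢
    constructor <;> linarith [this.1, this.2]
  -- convexity
  have h_conv : Convex ℝ S := by
    refine Convex.linear_preimage ?_ f
    exact convex_pi fun s _ => convex_Icc _ _
  -- volume of B
  have hvolB : volume B = ∏ s, ENNReal.ofReal (2 * cc s) := by
    rw [hB, volume_pi_pi]
    congr 1; funext s; rw [Real.volume_Icc]; congr 1; ring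
  have hvolS : volume S = volume B := by
    rw [hS, MeasureTheory.Measure.addHaar_preimage_linearMap volume hdetne]
    have : |(LinearMap.det f)⁻¹| = 1 := by
      rcases mul_self_eq_one_iff.mp hdet with h | h <;> rw [h] <;> norm_num
    rw [this, ENNReal.ofReal_one, one_mul]
  -- the lattice
  set b := Pi.basisFun ℝ (Unit ⊕ ι)
  set L := (Submodule.span ℤ (Set.range ⇑b)).toAddSubgroup with hL
  have : Countable L := inferInstanceAs (Countable (Submodule.span ℤ (Set.range ⇑b)))
  have fund := ZSpan.isAddFundamentalDomain' b volume
  have hvolF : volume (ZSpan.fundamentalDomain b) = 1 := by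
    rw [ZSpan.fundamentalDomain_pi_basisFun, volume_pi_pi]
    simp [Real.volume_Ico]
  have hfinrank : Module.finrank ℝ E = 1 + Fintype.card ι := by
    rw [Module.finrank_pi ℝ]; simp
  have hlt : volume (ZSpan.fundamentalDomain b) * 2 ^ (Module.finrank ℝ E) < volume S := by
    rw [hvolF, one_mul, hvolS, hvolB, hfinrank]
    rw [Fintype.prod_sum_type]
    simp only [hcc, Sum.elim_inl, Sum.elim_inr]
    rw [Finset.prod_const, Finset.prod_const]
    simp only [Finset.card_univ, Fintype.card_unit]
    have h2 : (2 : ℝ≥0∞) ^ (1 + Fintype.card ι)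
        = ENNReal.ofReal (2 ^ (1 + Fintype.card ι)) := by
      rw [ENNReal.ofReal_pow (by norm_num)]
      norm_num
    rw [h2, pow_one, ← ENNReal.ofReal_pow (by positivity), ← ENNReal.ofReal_mul (by positivity)]
    rw [ENNReal.ofReal_lt_ofReal_iff (by positivity), mul_pow, pow_add, pow_one]
    nlinarith [pow_pos (show (0:ℝ) < 2 by norm_num) (Fintype.card ι)]
  obtain ⟨g, hg0, hgS⟩ :=
    exists_ne_zero_mem_lattice_of_measure_mul_two_pow_lt_measure fund h_symm h_conv hlt
  -- integer coordinates
  have hint : ∀ y ∈ Submodule.span ℤ (Set.range ⇑b), ∀ s, ∃ z : ℤ, y s = (z : ℝ) := by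
    intro y hy
    induction hy using Submodule.span_induction with
    | mem y hy =>
      obtain ⟨i, rfl⟩ := hy
      intro s
      by_cases h : i = s
      · exact ⟨1, by simp [b, h, Pi.basisFun_apply]⟩
      · exact ⟨0, by simp [b, Pi.basisFun_apply, Pi.single_apply, h]⟩
    | zero => exact fun s => ⟨0, by simp⟩
    | add y z _ _ hy hz =>
      intro s
      obtain ⟨zy, hzy⟩ := hy s; obtain ⟨zz, hzz⟩ := hz s
      exact ⟨zy + zz, by push_cast [hzy, hzz]; simp [hzy, hzz]⟩
    | smul c y _ hy =>
      intro s
      obtain ⟨zy, hzy⟩ := hy s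
      exact ⟨c * zy, by push_cast; simp [hzy]⟩
  have hgmem : (g : E) ∈ Submodule.span ℤ (Set.range ⇑b) := g.2
  choose gz hgz using hint _ hgmem
  -- bounds from membership
  have hmem : ∀ s, f (g : E) s ∈ Set.Icc (-(cc s)) (cc s) := by
    intro s
    exact hgS s (Set.mem_univ s)
  have hbound0 : |(g : E) (Sum.inl ())| ≤ T := by
    have := hmem (Sum.inl ())
    rw [Set.mem_Icc] at this
    rw [abs_le]
    simpa [f, dmap, hcc] using this
  have hboundi : ∀ i, |x i * (g : E) (Sum.inl ()) - (g : E) (Sum.inr i)| ≤ ε := by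
    intro i
    have := hmem (Sum.inr i)
    rw [Set.mem_Icc] at this
    rw [abs_le]
    simpa [f, dmap, hcc] using this
  set N0 : ℤ := gz (Sum.inl ()) with hN0
  have hgN0 : (g : E) (Sum.inl ()) = (N0 : ℝ) := hgz _
  have hN0ne : N0 ≠ 0 := by
    intro h
    apply hg0
    have : (g : E) = 0 := by
      funext s
      rcases s with s | i
      · rw [hgz (Sum.inl s), ]
        rcases s with ⟨⟩
        rw [← hN0, h]; simp
      · have hb := hboundi i
        rw [hgN0, h] at hb
        simp only [Int.cast_zero, mul_zero, zero_sub, abs_neg] at hb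
        rw [hgz (Sum.inr i)] at hb ⊢
        have : |gz (Sum.inr i)| < 1 := by
          have : |(gz (Sum.inr i) : ℝ)| < 1 := lt_of_le_of_lt hb hε1
          rw [← Int.cast_abs] at this
          exact_mod_cast this
        have : gz (Sum.inr i) = 0 := Int.abs_lt_one_iff.mp this
        simp [this]
    exact Subtype.ext (by simpa using this)
  rcases lt_or_gt_of_ne hN0ne with hneg | hpos
  · refine ⟨-N0, fun i => -gz (Sum.inr i), by omega, ?_, ?_⟩
    · have : |(N0 : ℝ)| ≤ T := by rw [← hgN0]; exact hbound0
      rw [abs_of_neg (by exact_mod_cast hneg)] at this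
      push_cast
      linarith
    · intro i
      have := hboundi i
      rw [hgN0, hgz (Sum.inr i)] at this
      calc |(-N0 : ℤ) * x i - ((-gz (Sum.inr i) : ℤ) : ℝ)|
          = |x i * (N0 : ℝ) - (gz (Sum.inr i) : ℝ)| := by
            push_cast; rw [← abs_neg]; ring_nf
      _ ≤ ε := this
  · refine ⟨N0, fun i => gz (Sum.inr i), hpos, ?_, ?_⟩
    · have : |(N0 : ℝ)| ≤ T := by rw [← hgN0]; exact hbound0
      rwa [abs_of_pos (by exact_mod_cast hpos)] at this
    · intro i
      have := hboundi i
      rw [hgN0, hgz (Sum.inr i)] at this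
      calc |(N0 : ℤ) * x i - ((gz (Sum.inr i) : ℤ) : ℝ)|
          = |x i * (N0 : ℝ) - (gz (Sum.inr i) : ℝ)| := by rw [mul_comm]
      _ ≤ ε := this

end Dirichlet

section helpers

lemma mem_diag_xY {m n : ℕ} (Y : Fin m → Fin n → ℝ) (a : Fin m → ℝ) (b : Fin n → ℝ)
    (p : Fin m → ℤ) (q : Fin n → ℤ) :
    ((fun i => Real.exp (a i) * ((p i : ℝ) + ∑ j, Y i j * (q j : ℝ))),
      (fun j => Real.exp (b j) * (q j : ℝ))) ∈ diagAct a b (xYset m n Y) :=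
  ⟨((fun i => (p i : ℝ) + ∑ j, Y i j * (q j : ℝ)), fun j => (q j : ℝ)),
    ⟨p, q, rfl, rfl⟩, rfl⟩

lemma deltaSet_bddBelow {m n : ℕ} (S : Set ((Fin m → ℝ) × (Fin n → ℝ))) :
    BddBelow {x | ∃ v ∈ S, v ≠ 0 ∧ ‖v‖ = x} := by
  refine ⟨0, fun x hx => ?_⟩
  obtain ⟨v, -, -, rfl⟩ := hx
  exact norm_nonneg v

end helpers

set_option maxHeartbeats 1000000 in
/-- Transference Lemma, part (a). -/
theorem transference_a
    (m n : ℕ) (hm : 1 ≤ m) (hn : 1 ≤ n) (Y : Fin m → Fin n → ℝ)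
    (c : ℝ) (hc0 : 0 < c) (hc1 : c < 1) (t : ℝ) (ht : 0 < t)
    (a : Fin m → ℝ) (b : Fin n → ℝ)
    (ha : ∑ i, a i = t) (hb : ∑ j, b j = -t)
    (ha' : ∀ i, -((1 / ((m : ℝ) + n)) * Real.log (1 / c)) < a i)
    (hb' : ∀ j, b j < -((1 / ((m : ℝ) + n)) * Real.log (1 / c)))
    (hδ : deltaSet (diagAct a b (xYset m n Y)) < c ^ ((1 : ℝ) / ((m : ℝ) + n))) :
    ∃ (a' : Fin m → ℝ) (b' : Fin n → ℝ),
      (∑ i, a' i = t) ∧ (∑ j, b' j = -t) ∧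
      (∀ i, 0 < a' i) ∧ (∀ j, b' j < 0) ∧
      deltaSet (diagAct a' b' (xYset m n Y)) <
        c ^ ((1 : ℝ) / ((m : ℝ) * ((m : ℝ) + n))) := by
  classical
  have hm0 : (0:ℝ) < m := by exact_mod_cast hm
  have hn0 : (0:ℝ) < n := by exact_mod_cast hn
  have hmn : (0:ℝ) < (m:ℝ) + n := by linarith
  set R : ℝ := (1 / ((m : ℝ) + n)) * Real.log (1 / c) with hRdef
  have hlog : 0 < Real.log (1/c) := Real.log_pos (by rw [lt_div_iff₀ hc0]; linarith)
  have hR0 : 0 < R := by positivity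
  have hcpow1 : c ^ ((1:ℝ)/((m:ℝ)+n)) = Real.exp (-R) := by
    rw [Real.rpow_def_of_pos hc0, hRdef, one_div (c), Real.log_inv]
    congr 1
    ring
  have hcpow2 : c ^ ((1:ℝ)/((m:ℝ)*((m:ℝ)+n))) = Real.exp (-(R/m)) := by
    rw [Real.rpow_def_of_pos hc0, hRdef, one_div (c), Real.log_inv]
    congr 1
    rw [mul_comm ((m:ℝ)) ((m:ℝ)+n), one_div, mul_inv]
    ring
  -- extract a short vector
  rw [hcpow1] at hδ
  have hA : ∃ x ∈ {x | ∃ v ∈ diagAct a b (xYset m n Y), v ≠ 0 ∧ ‖v‖ = x},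
      x < Real.exp (-R) := by
    refine (csInf_lt_iff (deltaSet_bddBelow _) ?_).mp hδ
    refine ⟨_, _, mem_diag_xY Y a b (fun _ => 1) (fun _ => 0), ?_, rfl⟩
    intro h0
    have := congrFun (congrArg Prod.fst h0) ⟨0, hm⟩
    simp at this
  obtain ⟨x, ⟨v, hvmem, hvne, rfl⟩, hvlt⟩ := hA
  obtain ⟨w, ⟨p, q, hw1, hw2⟩, rfl⟩ := hvmem
  set ν : ℝ := ‖((fun i => Real.exp (a i) * w.1 i), fun j => Real.exp (b j) * w.2 j)‖ with hνdef
  set W : Fin m → ℝ := fun i => (p i : ℝ) + ∑ j, Y i j * (q j : ℝ) with hWdef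
  have hWd : ∀ i, w.1 i = W i := fun i => congrFun hw1 i
  have hQd : ∀ j, w.2 j = (q j : ℝ) := fun j => congrFun hw2 j
  have hν0 : 0 < ν := by rw [hνdef]; exact norm_pos_iff.mpr hvne
  have hWi : ∀ i, Real.exp (a i) * |W i| ≤ ν := by
    intro i
    have h1 : ‖Real.exp (a i) * w.1 i‖ ≤ ν :=
      le_trans (norm_le_pi_norm (fun i => Real.exp (a i) * w.1 i) i)
        (norm_fst_le ((fun i => Real.exp (a i) * w.1 i), fun j => Real.exp (b j) * w.2 j))
    rwa [Real.norm_eq_abs, abs_mul, abs_of_pos (Real.exp_pos _), hWd i] at h1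
  have hQj : ∀ j, Real.exp (b j) * |(q j : ℝ)| ≤ ν := by
    intro j
    have h1 : ‖Real.exp (b j) * w.2 j‖ ≤ ν :=
      le_trans (norm_le_pi_norm (fun j => Real.exp (b j) * w.2 j) j)
        (norm_snd_le ((fun i => Real.exp (a i) * w.1 i), fun j => Real.exp (b j) * w.2 j))
    rwa [Real.norm_eq_abs, abs_mul, abs_of_pos (Real.exp_pos _), hQd j] at h1
  -- q is nonzero
  have hq0 : q ≠ 0 := by
    intro hq
    apply hvne
    have hp0 : ∀ i, p i = 0 := by
      intro i
      have h1 := hWi i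
      have h2 : W i = (p i : ℝ) := by simp [hWdef, hq]
      rw [h2] at h1
      have h3 : Real.exp (a i) * |(p i : ℝ)| < Real.exp (-R) := lt_of_le_of_lt h1 hvlt
      have h4 : |(p i : ℝ)| < 1 := by
        by_contra h4
        push_neg at h4
        have h5 : Real.exp (a i) * 1 ≤ Real.exp (a i) * |(p i:ℝ)| :=
          mul_le_mul_of_nonneg_left h4 (Real.exp_pos _).le
        have h6 : Real.exp (-R) < Real.exp (a i) := Real.exp_lt_exp.mpr (ha' i)
        rw [mul_one] at h5
        linarith
      have h7 : |p i| < 1 := by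
        have := h4
        rw [← Int.cast_abs] at this
        exact_mod_cast this
      exact Int.abs_lt_one_iff.mp h7
    rw [Prod.ext_iff]
    constructor
    · funext i
      simp only [hWd i, Pi.zero_apply]
      simp [hWdef, hq, hp0 i]
    · funext j
      simp only [hQd j, Pi.zero_apply]
      simp [hq]
  -- the set of indices with nonpositive a
  set K : Finset (Fin m) := Finset.univ.filter (fun i => a i ≤ 0) with hKdef
  set k : ℕ := K.card with hkdef
  have hkm : k < m := by
    obtain ⟨i0, hi0⟩ : ∃ i, 0 < a i := by
      by_contra hall
      push_neg at hall
      have h1 : ∑ i, a i ≤ 0 := Finset.sum_nonpos (fun i _ => hall i)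
      rw [ha] at h1
      linarith
    have hKne : K ≠ Finset.univ := by
      intro hK
      have h2 : i0 ∈ K := hK ▸ Finset.mem_univ i0
      rw [hKdef, Finset.mem_filter] at h2
      linarith [h2.2]
    have h3 := Finset.card_lt_card (Finset.ssubset_univ_iff.mpr hKne)
    simpa [hkdef] using h3
  set D : ℝ := -∑ i ∈ K, a i with hDdef
  have hD0 : 0 ≤ D := by
    rw [hDdef, neg_nonneg]
    apply Finset.sum_nonpos
    intro i hi
    rw [hKdef, Finset.mem_filter] at hi
    exact hi.2
  have hsumc : ∑ i ∈ Kᶜ, a i = t + D := by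
    have h1 := Finset.sum_add_sum_compl K a
    rw [ha] at h1
    rw [hDdef]
    linarith
  set M : ℝ := Real.exp (-R) / ν with hMdef
  have hM1 : 1 < M := (one_lt_div hν0).mpr hvlt
  have hM0 : 0 < M := by linarith
  have hlogM : 0 < Real.log M := Real.log_pos hM1
  set σ : ℝ := min (t / (k + 1)) (Real.log M / (2 * (2 * k + 1))) with hσdef
  have hσ0 : 0 < σ := lt_min (by positivity) (by positivity)
  have hkσ : (k:ℝ) * σ < t := by
    have h1 : σ * ((k:ℝ) + 1) ≤ t := by
      rw [← le_div_iff₀ (by positivity), hσdef]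
      exact min_le_left _ _
    nlinarith
  have hσM : (2 * (k:ℝ) + 1) * σ < Real.log M := by
    have h1 : σ * (2 * (2 * (k:ℝ) + 1)) ≤ Real.log M := by
      rw [← le_div_iff₀ (by positivity), hσdef]
      exact min_le_right _ _
    nlinarith
  set T : ℝ := Real.exp ((k:ℝ)*(R/m) + (2*(k:ℝ)+1)*σ) with hTdef
  have hT0 : 0 < T := Real.exp_pos _
  set ε : ℝ := Real.exp (-(R/m) - 2*σ) with hεdef
  have hε0 : 0 < ε := Real.exp_pos _
  have KEY : T * ν < Real.exp (-(R/m)) := by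
    have hk1m : (k:ℝ) + 1 ≤ m := by exact_mod_cast hkm
    have step1 : T < Real.exp ((k:ℝ)*(R/m) + Real.log M) := by
      rw [hTdef]
      exact Real.exp_lt_exp.mpr (by linarith)
    have step2 : Real.exp ((k:ℝ)*(R/m) + Real.log M) * ν
        = Real.exp ((k:ℝ)*(R/m)) * Real.exp (-R) := by
      rw [Real.exp_add, Real.exp_log hM0, hMdef]
      field_simp
    have step3 : Real.exp ((k:ℝ)*(R/m)) * Real.exp (-R) ≤ Real.exp (-(R/m)) := by
      rw [← Real.exp_add]
      apply Real.exp_le_exp.mpr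
      have hRm : R / m * m = R := div_mul_cancel₀ R (ne_of_gt hm0)
      nlinarith [div_pos hR0 hm0]
    calc T * ν < Real.exp ((k:ℝ)*(R/m) + Real.log M) * ν :=
          mul_lt_mul_of_pos_right step1 hν0
      _ = Real.exp ((k:ℝ)*(R/m)) * Real.exp (-R) := step2
      _ ≤ Real.exp (-(R/m)) := step3
  have hε1 : ε < 1 := by
    rw [hεdef, Real.exp_lt_one_iff]
    have := div_pos hR0 hm0
    linarith
  have hcard : Fintype.card {i : Fin m // i ∈ K} = k := by
    rw [Fintype.card_coe, hkdef]
  have hTε : 1 < T * ε ^ (Fintype.card {i : Fin m // i ∈ K}) := by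
    rw [hcard, hTdef, hεdef, ← Real.exp_nat_mul, ← Real.exp_add]
    have he : (k:ℝ)*(R/m) + (2*(k:ℝ)+1)*σ + (k:ℝ) * (-(R/m) - 2*σ) = σ := by ring
    rw [he]
    calc (1:ℝ) = Real.exp 0 := Real.exp_zero.symm
      _ < Real.exp σ := Real.exp_lt_exp.mpr hσ0
  obtain ⟨N, r, hN1, hNT, happ⟩ :=
    dirichlet_sim (fun i : {i : Fin m // i ∈ K} => W i.1) T ε hε0 hε1 hTε
  have hN0' : (0:ℝ) ≤ (N:ℝ) := by exact_mod_cast le_trans (by norm_num) hN1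
  set rhat : Fin m → ℤ := fun i => if h : i ∈ K then r ⟨i, h⟩ else 0 with hrhatdef
  set p' : Fin m → ℤ := fun i => N * p i - rhat i with hp'def
  set q' : Fin n → ℤ := fun j => N * q j with hq'def
  set W' : Fin m → ℝ := fun i => (p' i : ℝ) + ∑ j, Y i j * (q' j : ℝ) with hW'def
  have hW'eq : ∀ i, W' i = (N:ℝ) * W i - (rhat i : ℝ) := by
    intro i
    simp only [hW'def, hWdef, hp'def, hq'def]
    push_cast
    have hs : ∑ j, Y i j * ((N:ℝ) * (q j:ℝ)) = (N:ℝ) * ∑ j, Y i j * (q j:ℝ) := by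
      rw [Finset.mul_sum]
      exact Finset.sum_congr rfl (fun j _ => by ring)
    rw [hs]
    ring
  set lam : ℝ := (t - k*σ)/(t + D) with hlamdef
  have htD : 0 < t + D := by linarith
  have hlam0 : 0 < lam := div_pos (by linarith) htD
  have hlam1 : lam ≤ 1 := by
    rw [hlamdef, div_le_one htD]
    have : 0 ≤ (k:ℝ) * σ := by positivity
    linarith
  set a' : Fin m → ℝ := fun i => if i ∈ K then σ else a i * lam with ha'2def
  have ha'K : ∀ i ∈ K, a' i = σ := fun i hi => by simp [ha'2def, hi]
  have ha'nK : ∀ i ∉ K, a' i = a i * lam := fun i hi => by simp [ha'2def, hi]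
  have hanKpos : ∀ i ∉ K, 0 < a i := by
    intro i hi
    by_contra hcon
    push_neg at hcon
    exact hi (by rw [hKdef]; exact Finset.mem_filter.mpr ⟨Finset.mem_univ i, hcon⟩)
  refine ⟨a', b, ?_, hb, ?_, fun j => lt_trans (hb' j) (by linarith), ?_⟩
  · -- sum of a'
    rw [← Finset.sum_add_sum_compl K a']
    have e1 : ∑ i ∈ K, a' i = (k:ℝ) * σ := by
      rw [Finset.sum_congr rfl ha'K, Finset.sum_const, nsmul_eq_mul, hkdef]
    have e2 : ∑ i ∈ Kᶜ, a' i = (t + D) * lam := by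
      rw [Finset.sum_congr rfl (fun i hi => ha'nK i (Finset.mem_compl.mp hi)),
        ← Finset.sum_mul, hsumc]
    rw [e1, e2]
    have e3 : (t + D) * lam = t - (k:ℝ)*σ := by
      rw [hlamdef, mul_div_cancel₀ _ (ne_of_gt htD)]
    rw [e3]
    ring
  · -- positivity of a'
    intro i
    by_cases hiK : i ∈ K
    · rw [ha'K i hiK]; exact hσ0
    · rw [ha'nK i hiK]; exact mul_pos (hanKpos i hiK) hlam0
  · -- the delta bound
    rw [hcpow2]
    set v' : (Fin m → ℝ) × (Fin n → ℝ) :=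
      ((fun i => Real.exp (a' i) * W' i), fun j => Real.exp (b j) * (q' j : ℝ)) with hv'def
    have hmem' : v' ∈ diagAct a' b (xYset m n Y) := mem_diag_xY Y a' b p' q'
    obtain ⟨j0, hj0⟩ := Function.ne_iff.mp hq0
    have hq'j0 : ((q' j0 : ℤ):ℝ) ≠ 0 := by
      rw [hq'def]
      simp only []
      rw [Int.cast_ne_zero]
      exact mul_ne_zero (by omega) (by simpa using hj0)
    have hv'ne : v' ≠ 0 := by
      intro h0
      apply hq'j0
      have h1 := congrFun (congrArg Prod.snd h0) j0
      simp only [hv'def, Pi.zero_apply] at h1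
      rcases mul_eq_zero.mp h1 with h2 | h2
      · exact absurd h2 (Real.exp_ne_zero _)
      · exact h2
    have hnorm : ‖v'‖ < Real.exp (-(R/m)) := by
      rw [hv'def, Prod.norm_def]
      apply max_lt
      · rw [pi_norm_lt_iff (Real.exp_pos (-(R/m)))]
        intro i
        show |Real.exp (a' i) * W' i| < Real.exp (-(R/m))
        rw [abs_mul, abs_of_pos (Real.exp_pos _)]
        by_cases hiK : i ∈ K
        · have hai := ha'K i hiK
          have hrh : (rhat i : ℝ) = (r ⟨i, hiK⟩ : ℝ) := by simp [hrhatdef, hiK]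
          have hwi : |W' i| ≤ ε := by
            rw [hW'eq i, hrh]
            exact happ ⟨i, hiK⟩
          calc Real.exp (a' i) * |W' i| ≤ Real.exp σ * ε := by
                rw [hai]
                exact mul_le_mul_of_nonneg_left hwi (Real.exp_pos _).le
            _ = Real.exp (σ + (-(R/m) - 2*σ)) := by rw [Real.exp_add, hεdef]
            _ < Real.exp (-(R/m)) := Real.exp_lt_exp.mpr (by linarith)
        · have hai := ha'nK i hiK
          have haipos := hanKpos i hiK
          have hrh : (rhat i : ℝ) = 0 := by simp [hrhatdef, hiK]
          have hwi : W' i = (N:ℝ) * W i := by rw [hW'eq i, hrh]; ring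
          have hWb : |W i| ≤ Real.exp (-(a i)) * ν := by
            have h1 := hWi i
            calc |W i| = Real.exp (-(a i)) * (Real.exp (a i) * |W i|) := by
                  rw [← mul_assoc, ← Real.exp_add]
                  simp
              _ ≤ Real.exp (-(a i)) * ν := mul_le_mul_of_nonneg_left h1 (Real.exp_pos _).le
          calc Real.exp (a' i) * |W' i| = Real.exp (a i * lam) * ((N:ℝ) * |W i|) := by
                rw [hai, hwi, abs_mul, abs_of_nonneg hN0']
            _ ≤ Real.exp (a i * lam) * (T * (Real.exp (-(a i)) * ν)) := by
                apply mul_le_mul_of_nonneg_left _ (Real.exp_pos _).le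
                exact mul_le_mul hNT hWb (abs_nonneg _) hT0.le
            _ = (Real.exp (a i * lam) * Real.exp (-(a i))) * (T * ν) := by ring
            _ ≤ 1 * (T * ν) := by
                apply mul_le_mul_of_nonneg_right _ (by positivity)
                rw [← Real.exp_add, ← Real.exp_zero]
                apply Real.exp_le_exp.mpr
                nlinarith
            _ < Real.exp (-(R/m)) := by rw [one_mul]; exact KEY
      · rw [pi_norm_lt_iff (Real.exp_pos (-(R/m)))]
        intro j
        show |Real.exp (b j) * ((q' j : ℤ):ℝ)| < Real.exp (-(R/m))
        rw [abs_mul, abs_of_pos (Real.exp_pos _)]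
        have h1 : |((q' j:ℤ) : ℝ)| = (N:ℝ) * |(q j : ℝ)| := by
          rw [hq'def]
          push_cast
          rw [abs_mul, abs_of_nonneg hN0']
        calc Real.exp (b j) * |((q' j:ℤ):ℝ)| = (N:ℝ) * (Real.exp (b j) * |(q j:ℝ)|) := by
              rw [h1]; ring
          _ ≤ T * ν := mul_le_mul hNT (hQj j) (by positivity) hT0.le
          _ < Real.exp (-(R/m)) := KEY
    calc deltaSet (diagAct a' b (xYset m n Y)) ≤ ‖v'‖ :=
          csInf_le (deltaSet_bddBelow _) ⟨v', hmem', hv'ne, rfl⟩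
      _ < Real.exp (-(R/m)) := hnorm
end

section
/- Transference, part (b): Let m,n ≥ 1, Y ∈ ℝ^{m×n}, 0 < c < 1, t > 0, and set R_c = (1/(m+n)) log(1/c). Suppose there exists a = (a_1,…,a_{m+n}) with Σ_{i≤m} a_i = t = −Σ_{j>m} a_{m+j}, a_i > 0 for i ≤ m and a_{m+j} < 0 for j ≤ n, such that δ(exp(a)·x_Y) < c^{(m+n−1)/(m(m+n))}. Then there exists a' in the cone C_{R_c}(t − ((n−1)/(m+n)) log c) (i.e., Σ_{i≤m} a'_i = t − ((n−1)/(m+n)) log c = −Σ_j a'_{m+j}, with a'_i > −R_c for i ≤ m and a'_{m+j} < −R_c for j ≤ n) such that δ(exp(a')·x_Y) < c^{1/(m+n)}. -/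
open scoped BigOperators

set_option maxHeartbeats 2000000

/-- Transference Lemma, part (b). -/
theorem transference_b
    (m n : ℕ) (hm : 1 ≤ m) (hn : 1 ≤ n) (Y : Fin m → Fin n → ℝ)
    (c : ℝ) (hc0 : 0 < c) (hc1 : c < 1) (t : ℝ) (ht : 0 < t)
    (a : Fin m → ℝ) (b : Fin n → ℝ)
    (ha : ∑ i, a i = t) (hb : ∑ j, b j = -t)
    (ha' : ∀ i, 0 < a i) (hb' : ∀ j, b j < 0)
    (hδ : deltaSet (diagAct a b (xYset m n Y)) <
      c ^ (((m : ℝ) + n - 1) / ((m : ℝ) * ((m : ℝ) + n)))) :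
    ∃ (a' : Fin m → ℝ) (b' : Fin n → ℝ),
      (∑ i, a' i = t - (((n : ℝ) - 1) / ((m : ℝ) + n)) * Real.log c) ∧
      (∑ j, b' j = -(t - (((n : ℝ) - 1) / ((m : ℝ) + n)) * Real.log c)) ∧
      (∀ i, -((1 / ((m : ℝ) + n)) * Real.log (1 / c)) < a' i) ∧
      (∀ j, b' j < -((1 / ((m : ℝ) + n)) * Real.log (1 / c))) ∧
      deltaSet (diagAct a' b' (xYset m n Y)) < c ^ ((1 : ℝ) / ((m : ℝ) + n)) := by
  classical
  have hm0 : (0:ℝ) < m := by exact_mod_cast hm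
  have hn0 : (0:ℝ) < n := by exact_mod_cast hn
  have hn1 : (1:ℝ) ≤ n := by exact_mod_cast hn
  have hmn : (0:ℝ) < (m:ℝ) + n := by linarith
  have hmne : (m:ℝ) ≠ 0 := ne_of_gt hm0
  have hmnne : (m:ℝ) + n ≠ 0 := ne_of_gt hmn
  obtain ⟨L, hLdef⟩ : ∃ L : ℝ, L = -Real.log c := ⟨_, rfl⟩
  have hL : 0 < L := by
    have := Real.log_neg hc0 hc1; rw [hLdef]; linarith
  obtain ⟨R, hRdef⟩ : ∃ R : ℝ, R = L / ((m:ℝ) + n) := ⟨_, rfl⟩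
  have hR : 0 < R := by rw [hRdef]; exact div_pos hL hmn
  obtain ⟨D, hDdef⟩ : ∃ D : ℝ, D = ((n:ℝ) - 1) * R := ⟨_, rfl⟩
  have hD : 0 ≤ D := by rw [hDdef]; exact mul_nonneg (by linarith) hR.le
  obtain ⟨θ, hθdef⟩ : ∃ θ : ℝ, θ = D / ((m:ℝ) * n) := ⟨_, rfl⟩
  have hθ : 0 ≤ θ := by rw [hθdef]; exact div_nonneg hD (by positivity)
  have hDm : 0 ≤ D / m := div_nonneg hD hm0.le
  have hlogc : Real.log c = -L := by rw [hLdef]; ring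
  -- the two rpow values expressed as exponentials
  have hε : c ^ (((m : ℝ) + n - 1) / ((m : ℝ) * ((m : ℝ) + n))) = Real.exp (-(R + D / m)) := by
    rw [Real.rpow_def_of_pos hc0]
    congr 1
    rw [hlogc, hDdef, hRdef]
    field_simp
    ring
  have hB : c ^ ((1 : ℝ) / ((m : ℝ) + n)) = Real.exp (-R) := by
    rw [Real.rpow_def_of_pos hc0]
    congr 1
    rw [hlogc, hRdef]
    field_simp
  have hRgoal : -((1 / ((m : ℝ) + n)) * Real.log (1 / c)) = -R := by
    rw [one_div c, Real.log_inv, hlogc, hRdef]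
    field_simp
  -- extract a short nonzero vector from the hypothesis
  have hNbdd : BddBelow {x | ∃ v ∈ diagAct a b (xYset m n Y), v ≠ 0 ∧ ‖v‖ = x} := by
    refine ⟨0, ?_⟩
    rintro x ⟨v, -, -, rfl⟩
    exact norm_nonneg v
  have hNne : Set.Nonempty {x | ∃ v ∈ diagAct a b (xYset m n Y), v ≠ 0 ∧ ‖v‖ = x} := by
    refine ⟨_, ((fun i => Real.exp (a i) * (1:ℝ)), fun j => Real.exp (b j) * (0:ℝ)), ?_, ?_, rfl⟩
    · exact ⟨((fun _ => (1:ℝ)), fun _ => (0:ℝ)),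
        ⟨fun _ => 1, fun _ => 0, by simp, by simp⟩, rfl⟩
    · intro h
      have := congrFun (congrArg Prod.fst h) ⟨0, hm⟩
      simp at this
  have hδ' : sInf {x | ∃ v ∈ diagAct a b (xYset m n Y), v ≠ 0 ∧ ‖v‖ = x} <
      Real.exp (-(R + D / m)) := by
    rw [← hε]; exact hδ
  obtain ⟨x, hxmem, hxlt⟩ := (csInf_lt_iff hNbdd hNne).1 hδ'
  obtain ⟨v, hvS, hvne, rfl⟩ := hxmem
  obtain ⟨w, hwmem, rfl⟩ := hvS
  obtain ⟨p, q, hw1, hw2⟩ := hwmem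
  obtain ⟨ε, hεdef⟩ : ∃ ε : ℝ, ε = Real.exp (-(R + D / m)) := ⟨_, rfl⟩
  have hxlt' : ‖((fun i => Real.exp (a i) * w.1 i), fun j => Real.exp (b j) * w.2 j)‖ < ε := by
    rw [hεdef]; exact hxlt
  -- componentwise bounds
  have h1 : ∀ i, |Real.exp (a i) * w.1 i| < ε := by
    intro i
    have hA := norm_le_pi_norm (f := fun i => Real.exp (a i) * w.1 i) i
    simp only [Real.norm_eq_abs] at hA
    have hBp := norm_fst_le ((fun i => Real.exp (a i) * w.1 i), fun j => Real.exp (b j) * w.2 j)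
    exact lt_of_le_of_lt (le_trans hA hBp) hxlt'
  have h2 : ∀ j, |Real.exp (b j) * w.2 j| < ε := by
    intro j
    have hA := norm_le_pi_norm (f := fun j => Real.exp (b j) * w.2 j) j
    simp only [Real.norm_eq_abs] at hA
    have hBp := norm_snd_le ((fun i => Real.exp (a i) * w.1 i), fun j => Real.exp (b j) * w.2 j)
    exact lt_of_le_of_lt (le_trans hA hBp) hxlt'
  have hεlt1 : ε < 1 := by
    rw [hεdef, ← Real.exp_zero]
    apply Real.exp_lt_exp.2
    linarith
  -- q ≠ 0
  have hq : ∃ j0, q j0 ≠ 0 := by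
    by_contra h
    push_neg at h
    apply hvne
    have hp : ∀ i, p i = 0 := by
      intro i
      have hw1i : w.1 i = (p i : ℝ) := by
        rw [hw1]; simp [h]
      have h1i := h1 i
      rw [hw1i] at h1i
      have hexp1 : (1:ℝ) ≤ Real.exp (a i) := by
        rw [← Real.exp_zero]; exact Real.exp_le_exp.2 (ha' i).le
      have habslt : |(p i : ℝ)| < 1 := by
        have habs : |(p i : ℝ)| ≤ |Real.exp (a i) * (p i : ℝ)| := by
          rw [abs_mul, abs_of_pos (Real.exp_pos _)]
          nlinarith [abs_nonneg ((p i : ℝ))]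
        linarith
      have : |p i| < 1 := by exact_mod_cast habslt
      exact Int.abs_lt_one_iff.1 this
    have hw10 : ∀ i, w.1 i = 0 := by
      intro i; rw [hw1]; simp [h, hp]
    have hw20 : ∀ j, w.2 j = 0 := by
      intro j; rw [hw2]; simp [h]
    ext z
    · simp [hw10]
    · simp [hw20]
  obtain ⟨j0, hj0⟩ := hq
  have hbj0 : b j0 < -(R + D / m) := by
    have hq1 : (1:ℝ) ≤ |(q j0 : ℝ)| := by
      rw [← Int.cast_abs]
      exact_mod_cast Int.one_le_abs (by exact_mod_cast hj0)
    have h2j := h2 j0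
    rw [hw2] at h2j
    simp only [abs_mul, abs_of_pos (Real.exp_pos (b j0))] at h2j
    have : Real.exp (b j0) < ε := by
      nlinarith [Real.exp_pos (b j0)]
    rw [hεdef] at this
    exact Real.exp_lt_exp.1 this
  -- construct a' and b'
  obtain ⟨g, hgdef⟩ : ∃ g : Fin n → ℝ, g = fun j => max 0 (R + b j) + θ := ⟨_, rfl⟩
  have hg0 : ∀ j, 0 ≤ g j := by
    intro j; rw [hgdef]; exact add_nonneg (le_max_left _ _) hθ
  have hgR : ∀ j, g j ≤ R + θ := by
    intro j
    have h : max 0 (R + b j) ≤ R := max_le hR.le (by linarith [hb' j])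
    rw [hgdef]
    simpa using add_le_add_right h θ
  obtain ⟨a', ha'def⟩ : ∃ a' : Fin m → ℝ, a' = fun i => a i + D / m := ⟨_, rfl⟩
  obtain ⟨b', hb'def⟩ : ∃ b' : Fin n → ℝ, b' = fun j =>
      if j = j0 then (-(t + D)) - ∑ j' ∈ Finset.univ.erase j0, (b j' - g j') else b j - g j :=
    ⟨_, rfl⟩
  have hb'spec : ∀ j, (j = j0 ∧
        b' j = (-(t + D)) - ∑ j' ∈ Finset.univ.erase j0, (b j' - g j')) ∨
      (j ≠ j0 ∧ b' j = b j - g j) := by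
    intro j
    by_cases hj : j = j0
    · left; exact ⟨hj, by rw [hb'def]; simp [hj]⟩
    · right; exact ⟨hj, by rw [hb'def]; simp [hj]⟩
  have hb'j0eq : b' j0 = (-(t + D)) - ∑ j' ∈ Finset.univ.erase j0, (b j' - g j') := by
    rcases hb'spec j0 with ⟨-, h⟩ | ⟨h, -⟩
    · exact h
    · exact absurd rfl h
  have hb'ne : ∀ j, j ≠ j0 → b' j = b j - g j := by
    intro j hj
    rcases hb'spec j with ⟨h, -⟩ | ⟨-, h⟩
    · exact absurd h hj
    · exact h
  have hsumerase : ∑ j' ∈ Finset.univ.erase j0, b j' = -t - b j0 := by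
    have := Finset.add_sum_erase Finset.univ b (Finset.mem_univ j0)
    rw [hb] at this
    linarith
  -- value and bounds at j0
  have hb'j0 : b' j0 = b j0 - D + ∑ j' ∈ Finset.univ.erase j0, g j' := by
    rw [hb'j0eq, Finset.sum_sub_distrib, hsumerase]
    ring
  have hcard : ((Finset.univ.erase j0).card : ℝ) = (n:ℝ) - 1 := by
    rw [Finset.card_erase_of_mem (Finset.mem_univ j0), Finset.card_univ, Fintype.card_fin]
    rw [Nat.cast_sub hn]
    simp
  have hsumg : ∑ j' ∈ Finset.univ.erase j0, g j' ≤ ((n:ℝ) - 1) * (R + θ) := by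
    have := Finset.sum_le_card_nsmul (Finset.univ.erase j0) g (R + θ) (fun j _ => hgR j)
    rw [nsmul_eq_mul] at this
    rwa [hcard] at this
  have hnθ : ((n:ℝ) - 1) * θ ≤ D / m := by
    have h1' : ((n:ℝ) - 1) * θ ≤ (n:ℝ) * θ :=
      mul_le_mul_of_nonneg_right (by linarith) hθ
    have h2' : (n:ℝ) * θ = D / m := by
      rw [hθdef]; field_simp
    linarith
  have hb'j0le : b' j0 ≤ b j0 + D / m := by
    rw [hb'j0]
    have heq : b j0 - D + ((n:ℝ) - 1) * (R + θ) = b j0 + ((n:ℝ) - 1) * θ := by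
      rw [hDdef]; ring
    linarith [hsumg]
  -- bounds for all j
  have hb'le : ∀ j, b' j ≤ b j + D / m := by
    intro j
    by_cases hj : j = j0
    · subst hj; exact hb'j0le
    · rw [hb'ne j hj]
      have := hg0 j
      linarith
  have hb'lt : ∀ j, b' j < -R := by
    intro j
    by_cases hj : j = j0
    · subst hj
      linarith [hb'j0le, hbj0]
    · have hθpos : 0 < θ := by
        have hn2 : (2:ℝ) ≤ n := by
          by_contra hcon
          push_neg at hcon
          have hne1 : n = 1 := by
            have : n < 2 := by exact_mod_cast hcon
            omega
          subst hne1
          exact hj (Fin.ext (by omega))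
        have hDpos : 0 < D := by
          rw [hDdef]; nlinarith
        rw [hθdef]; positivity
      rw [hb'ne j hj, hgdef]
      have hmax : R + b j ≤ max 0 (R + b j) := le_max_right _ _
      simp only
      linarith
  refine ⟨a', b', ?_, ?_, ?_, ?_, ?_⟩
  · -- sum of a'
    have hs : ∑ i, a' i = t + D := by
      rw [ha'def]
      rw [Finset.sum_add_distrib, ha, Finset.sum_const, Finset.card_univ, Fintype.card_fin,
        nsmul_eq_mul]
      field_simp
    rw [hs, hlogc, hDdef, hRdef]
    field_simp
    ring
  · -- sum of b'
    have hsum : ∑ j, b' j = -(t + D) := by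
      rw [← Finset.add_sum_erase Finset.univ b' (Finset.mem_univ j0)]
      have he : ∑ j' ∈ Finset.univ.erase j0, b' j' =
          ∑ j' ∈ Finset.univ.erase j0, (b j' - g j') := by
        apply Finset.sum_congr rfl
        intro j' hj'
        exact hb'ne j' (Finset.ne_of_mem_erase hj')
      rw [he, hb'j0eq]
      ring
    rw [hsum, hlogc, hDdef, hRdef]
    field_simp
    ring
  · -- lower bound for a'
    intro i
    rw [hRgoal, ha'def]
    have := ha' i
    simp only
    linarith
  · -- upper bound for b'
    intro j
    rw [hRgoal]
    exact hb'lt j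
  · -- final delta bound
    rw [hB]
    have huS : ((fun i => Real.exp (a' i) * w.1 i), fun j => Real.exp (b' j) * w.2 j) ∈
        diagAct a' b' (xYset m n Y) := ⟨w, ⟨p, q, hw1, hw2⟩, rfl⟩
    have hune : ((fun i => Real.exp (a' i) * w.1 i), fun j => Real.exp (b' j) * w.2 j) ≠
        (0 : (Fin m → ℝ) × (Fin n → ℝ)) := by
      intro h
      have := congrFun (congrArg Prod.snd h) j0
      simp only [Prod.snd_zero, Pi.zero_apply] at this
      rw [hw2] at this
      rcases mul_eq_zero.1 this with h' | h'
      · exact Real.exp_ne_zero _ h'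
      · have h'' : ((q j0 : ℝ)) = 0 := h'
        exact hj0 (by exact_mod_cast h'')
    have hu1 : ∀ i, |Real.exp (a' i) * w.1 i| < Real.exp (-R) := by
      intro i
      have hexpeq : Real.exp (a' i) = Real.exp (D / m) * Real.exp (a i) := by
        rw [← Real.exp_add, ha'def]
        simp only
        ring_nf
      rw [hexpeq, mul_assoc, abs_mul, abs_of_pos (Real.exp_pos _)]
      have hlt : Real.exp (D / m) * |Real.exp (a i) * w.1 i| < Real.exp (D / m) * ε :=
        (mul_lt_mul_iff_right₀ (Real.exp_pos _)).2 (h1 i)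
      have hend : Real.exp (D / m) * ε = Real.exp (-R) := by
        rw [hεdef, ← Real.exp_add]; ring_nf
      linarith
    have hu2 : ∀ j, |Real.exp (b' j) * w.2 j| < Real.exp (-R) := by
      intro j
      have hle : Real.exp (b' j) ≤ Real.exp (D / m) * Real.exp (b j) := by
        rw [← Real.exp_add]
        exact Real.exp_le_exp.2 (by linarith [hb'le j])
      have hend : Real.exp (D / m) * ε = Real.exp (-R) := by
        rw [hεdef, ← Real.exp_add]; ring_nf
      have hstep : |Real.exp (b' j) * w.2 j| ≤ Real.exp (D / m) * |Real.exp (b j) * w.2 j| := by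
        rw [abs_mul, abs_of_pos (Real.exp_pos _), abs_mul, abs_of_pos (Real.exp_pos (b j)),
          ← mul_assoc]
        exact mul_le_mul_of_nonneg_right hle (abs_nonneg _)
      have hlt : Real.exp (D / m) * |Real.exp (b j) * w.2 j| < Real.exp (D / m) * ε :=
        (mul_lt_mul_iff_right₀ (Real.exp_pos _)).2 (h2 j)
      linarith
    have hunorm : ‖((fun i => Real.exp (a' i) * w.1 i), fun j => Real.exp (b' j) * w.2 j)‖ <
        Real.exp (-R) := by
      rw [Prod.norm_def]
      apply max_lt
      · rw [pi_norm_lt_iff (Real.exp_pos _)]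
        intro i
        rw [Real.norm_eq_abs]
        exact hu1 i
      · rw [pi_norm_lt_iff (Real.exp_pos _)]
        intro j
        rw [Real.norm_eq_abs]
        exact hu2 j
    have hdle : deltaSet (diagAct a' b' (xYset m n Y)) ≤
        ‖((fun i => Real.exp (a' i) * w.1 i), fun j => Real.exp (b' j) * w.2 j)‖ := by
      apply csInf_le
      · refine ⟨0, ?_⟩
        rintro x ⟨v, -, -, rfl⟩
        exact norm_nonneg v
      · exact ⟨_, huS, hune, rfl⟩
    linarith
end

section
/- Covering lemma: Let (X,d) be a metric space, h ∈ ℕ, and let 0 = α_0 < β_1 < α_1 = 3β_1 < β_2 < ⋯ < β_h < α_h = 3β_h < β_{h+1} be real numbers. For a partition Q of {1,…,h}, set ρ^Q(x) := max over blocks I ∈ Q of max{d(x_i,x_j) : i,j ∈ I}, and ρ_Q(x) := min over distinct blocks I ≠ I' in Q of min{d(x_i,x_j) : i ∈ I, j ∈ I'}. Let Δ_Q(α,β) := {x ∈ X^h : ρ^Q(x) ≤ α and ρ_Q(x) > β} and Δ(α) := {x ∈ X^h : max_{i,j} d(x_i,x_j) ≤ α}. Then X^h = Δ(β_{h+1})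 ∪ ⋃_{l=0}^h ⋃_{Q : #Q ≥ 2} Δ_Q(α_l, β_{l+1}). -/
open Finset

namespace BGCover

variable {X : Type*} [MetricSpace X] {n : ℕ} (x : Fin n → X)

/-- chain-equivalence at scale `t` -/
def E (t : ℝ) : Fin n → Fin n → Prop :=
  Relation.ReflTransGen (fun a b => dist (x a) (x b) ≤ t)

lemma E_refl (t : ℝ) (a : Fin n) : E x t a a := Relation.ReflTransGen.refl

lemma E_symm {t : ℝ} {a b : Fin n} (h : E x t a b) : E x t b a :=
  (@Relation.ReflTransGen.stdSymm _ _ ⟨fun p q hpq => by rwa [dist_comm] at hpq⟩).symm _ _ h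

lemma E_trans {t : ℝ} {a b c : Fin n} (h1 : E x t a b) (h2 : E x t b c) : E x t a c :=
  Relation.ReflTransGen.trans h1 h2

lemma E_mono {s t : ℝ} (hst : s ≤ t) {a b : Fin n} (h : E x s a b) : E x t a b :=
  Relation.ReflTransGen.mono (fun _ _ hpq => le_trans hpq hst) _ _ h

/-- the class of `a` at scale `t` -/
noncomputable def K (t : ℝ) (a : Fin n) : Finset (Fin n) :=
  @Finset.filter _ (E x t a) (Classical.decPred _) Finset.univ

lemma mem_K {t : ℝ} {a b : Fin n} : b ∈ K x t a ↔ E x t a b := by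
  simp [K]

lemma self_mem_K (t : ℝ) (a : Fin n) : a ∈ K x t a := (mem_K x).2 (E_refl x t a)

lemma K_eq_of {t : ℝ} {a b : Fin n} (h : E x t a b) : K x t a = K x t b := by
  ext u
  simp only [mem_K]
  exact ⟨fun h2 => E_trans x (E_symm x h) h2, fun h2 => E_trans x h h2⟩

/-- number of classes at scale `t` meeting `S` -/
noncomputable def nc (t : ℝ) (S : Finset (Fin n)) : ℕ := (S.image (K x t)).card

lemma biUnion_K {s t : ℝ} (hst : s ≤ t) (a : Fin n) :
    (K x s a).biUnion (K x t) = K x t a := by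
  ext u
  simp only [mem_biUnion, mem_K]
  constructor
  · rintro ⟨v, hv, hvu⟩
    exact E_trans x (E_mono x hst hv) hvu
  · intro hu
    exact ⟨a, E_refl x s a, hu⟩

lemma image_K_of_le {s t : ℝ} (hst : s ≤ t) (S : Finset (Fin n)) :
    S.image (K x t) = (S.image (K x s)).image (fun C => C.biUnion (K x t)) := by
  rw [Finset.image_image]
  apply Finset.image_congr
  intro a _
  exact (biUnion_K x hst a).symm

/-- scale-antitonicity of the number of classes -/
lemma nc_anti {s t : ℝ} (hst : s ≤ t) (S : Finset (Fin n)) : nc x t S ≤ nc x s S := by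
  rw [nc, nc, image_K_of_le x hst S]
  exact Finset.card_image_le

/-- additivity of the class count over the classes of a coarser scale -/
lemma sum_nc {s' s : ℝ} (h' : s' ≤ s) {V : Finset (Fin n)}
    (hV : ∀ a ∈ V, K x s a ⊆ V) :
    ∑ C ∈ V.image (K x s), nc x s' C = nc x s' V := by
  have hdisj : ∀ C ∈ V.image (K x s), ∀ C' ∈ V.image (K x s), C ≠ C' →
      Disjoint (C.image (K x s')) (C'.image (K x s')) := by
    intro C hC C' hC' hne
    obtain ⟨a, _, rfl⟩ := Finset.mem_image.1 hC
    obtain ⟨a', _, rfl⟩ := Finset.mem_image.1 hC'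
    rw [Finset.disjoint_left]
    rintro D hD hD'
    obtain ⟨b, hb, rfl⟩ := Finset.mem_image.1 hD
    obtain ⟨b', hb', hbb'⟩ := Finset.mem_image.1 hD'
    have hEb : E x s' b' b := by
      have : b ∈ K x s' b' := by rw [hbb']; exact self_mem_K x s' b
      exact (mem_K x).1 this
    have h1 : K x s a = K x s b := K_eq_of x ((mem_K x).1 hb)
    have h2 : K x s a' = K x s b' := K_eq_of x ((mem_K x).1 hb')
    have h3 : K x s b' = K x s b := K_eq_of x (E_mono x h' hEb)
    exact hne (by rw [h1, h2, h3])
  have hunion : V.image (K x s') = (V.image (K x s)).biUnion (fun C => C.image (K x s')) := by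
    ext D
    simp only [Finset.mem_image, Finset.mem_biUnion]
    constructor
    · rintro ⟨b, hb, rfl⟩
      exact ⟨K x s b, ⟨b, hb, rfl⟩, b, self_mem_K x s b, rfl⟩
    · rintro ⟨C, ⟨a, ha, rfl⟩, b, hb, rfl⟩
      exact ⟨b, hV a ha hb, rfl⟩
  rw [nc, hunion, Finset.card_biUnion hdisj]
  rfl

/-- splitting the global class count along a class of a coarser scale -/
lemma nc_split {s' s : ℝ} (h' : s' ≤ s) (a : Fin n) :
    nc x s' Finset.univ = nc x s' (K x s a) + nc x s' (Finset.univ \ K x s a) := by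
  have hu : K x s a ∪ (Finset.univ \ K x s a) = Finset.univ :=
    Finset.union_sdiff_of_subset (Finset.subset_univ _)
  have hdisj : Disjoint ((K x s a).image (K x s'))
      ((Finset.univ \ K x s a).image (K x s')) := by
    rw [Finset.disjoint_left]
    rintro D hD hD'
    obtain ⟨b, hb, rfl⟩ := Finset.mem_image.1 hD
    obtain ⟨b', hb', hbb'⟩ := Finset.mem_image.1 hD'
    have hEb : E x s' b' b := (mem_K x).1 (by rw [hbb']; exact self_mem_K x s' b)
    have hb'K : b' ∈ K x s a := by
      have h1 : K x s b' = K x s b := K_eq_of x (E_mono x h' hEb)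
      have h2 : E x s a b := (mem_K x).1 hb
      rw [mem_K]
      exact E_trans x h2 ((mem_K x).1 (by rw [← h1]; exact self_mem_K x s b'))
    exact (Finset.mem_sdiff.1 hb').2 hb'K
  rw [nc]
  conv_lhs => rw [← hu]
  rw [Finset.image_union, Finset.card_union_of_disjoint hdisj]
  rfl


/-- chains within `V` with steps of size `≤ t` -/
def Ch (V : Finset (Fin n)) (t : ℝ) : Fin n → Fin n → Prop :=
  Relation.ReflTransGen (fun p q => p ∈ V ∧ q ∈ V ∧ dist (x p) (x q) ≤ t)

/-- last exit from a set along a refl-trans chain -/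
lemma exitLemma {α : Type*} {r : α → α → Prop} {S : α → Prop} {a b : α}
    (hab : Relation.ReflTransGen r a b) (ha : S a) (hb : ¬ S b) :
    ∃ p q, S p ∧ r p q ∧ ¬ S q ∧
      Relation.ReflTransGen (fun u v => r u v ∧ ¬ S u ∧ ¬ S v) q b := by
  revert hb
  induction hab with
  | refl => intro hb; exact absurd ha hb
  | @tail c d hac hcd ih =>
    intro hbd
    by_cases hSc : S c
    · exact ⟨c, d, hSc, hcd, hbd, Relation.ReflTransGen.refl⟩
    · obtain ⟨p, q, hp, hpq, hq, htail⟩ := ih hSc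
      exact ⟨p, q, hp, hpq, hq, htail.tail ⟨hcd, hSc, hbd⟩⟩

lemma E_to_chain {t : ℝ} {a b : Fin n} (hab : E x t a b) :
    Ch x (K x t a) t a b := by
  induction hab with
  | refl => exact Relation.ReflTransGen.refl
  | @tail c d hac hcd ih =>
    exact ih.tail ⟨(mem_K x).2 hac, (mem_K x).2 (hac.tail hcd), hcd⟩

/-- key covering bound: a chain at scale `t` within a set saturated for the classes at a
finer scale `s` has length controlled by the per-class bounds plus the number of merges. -/
lemma chainBound (s t : ℝ) (ht : 0 ≤ t) (B : Finset (Fin n) → ℝ)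
    (hB0 : ∀ C, 0 ≤ B C)
    (hB : ∀ u v, E x s u v → dist (x u) (x v) ≤ B (K x s u)) :
    ∀ V : Finset (Fin n), (∀ a ∈ V, K x s a ⊆ V) →
      ∀ a b, a ∈ V → Ch x V t a b →
      dist (x a) (x b) ≤ (∑ C ∈ V.image (K x s), B C) +
        (((V.image (K x s)).card : ℝ) - 1) * t := by
  intro V
  induction V using Finset.strongInduction with
  | _ V ih =>
    intro hV a b ha hab
    have hKa : K x s a ⊆ V := hV a ha
    have hcard1 : 1 ≤ (V.image (K x s)).card :=
      Finset.card_pos.2 ⟨K x s a, Finset.mem_image_of_mem _ ha⟩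
    by_cases hbK : b ∈ K x s a
    · have h1 : dist (x a) (x b) ≤ B (K x s a) := hB a b ((mem_K x).1 hbK)
      have h2 : B (K x s a) ≤ ∑ C ∈ V.image (K x s), B C :=
        Finset.single_le_sum (fun C _ => hB0 C) (Finset.mem_image_of_mem _ ha)
      have h3 : (0:ℝ) ≤ ((V.image (K x s)).card : ℝ) - 1 := by
        have : (1:ℝ) ≤ ((V.image (K x s)).card : ℝ) := by exact_mod_cast hcard1
        linarith
      nlinarith
    · obtain ⟨p, q, hp, ⟨hpV, hqV, hpq⟩, hq, htail⟩ :=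
        exitLemma (S := fun u => u ∈ K x s a) hab (self_mem_K x s a) hbK
      set V' := V \ K x s a with hV'def
      have hV'ss : V' ⊂ V := Finset.sdiff_ssubset hKa ⟨a, self_mem_K x s a⟩
      have hV'sat : ∀ u ∈ V', K x s u ⊆ V' := by
        intro u hu v hv
        rw [Finset.mem_sdiff] at hu ⊢
        refine ⟨hV u hu.1 hv, fun hvK => hu.2 ?_⟩
        rw [mem_K] at hv hvK ⊢
        exact E_trans x hvK (E_symm x hv)
      have hq' : q ∈ V' := Finset.mem_sdiff.2 ⟨hqV, hq⟩
      have hchain' : Ch x V' t q b := by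
        refine Relation.ReflTransGen.mono ?_ _ _ htail
        rintro u v ⟨⟨huV, hvV, huv⟩, hu, hv⟩
        exact ⟨Finset.mem_sdiff.2 ⟨huV, hu⟩, Finset.mem_sdiff.2 ⟨hvV, hv⟩, huv⟩
      have IH := ih V' hV'ss hV'sat q b hq' hchain'
      -- image decomposition
      have hnotmem : K x s a ∉ V'.image (K x s) := by
        intro hmem
        obtain ⟨v, hv, hveq⟩ := Finset.mem_image.1 hmem
        have : v ∈ K x s a := by rw [← hveq]; exact self_mem_K x s v
        exact (Finset.mem_sdiff.1 hv).2 this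
      have himg : V.image (K x s) = insert (K x s a) (V'.image (K x s)) := by
        ext C
        simp only [Finset.mem_image, Finset.mem_insert]
        constructor
        · rintro ⟨v, hv, rfl⟩
          by_cases hvK : v ∈ K x s a
          · left; exact (K_eq_of x ((mem_K x).1 hvK)).symm
          · right; exact ⟨v, Finset.mem_sdiff.2 ⟨hv, hvK⟩, rfl⟩
        · rintro (rfl | ⟨v, hv, rfl⟩)
          · exact ⟨a, ha, rfl⟩
          · exact ⟨v, (Finset.mem_sdiff.1 hv).1, rfl⟩
      have hap : dist (x a) (x p) ≤ B (K x s a) := hB a p ((mem_K x).1 hp)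
      have htri : dist (x a) (x b) ≤ dist (x a) (x p) + dist (x p) (x q) + dist (x q) (x b) :=
        dist_triangle4 _ _ _ _
      have hk' : 1 ≤ (V'.image (K x s)).card :=
        Finset.card_pos.2 ⟨K x s q, Finset.mem_image_of_mem _ hq'⟩
      rw [himg, Finset.sum_insert hnotmem, Finset.card_insert_of_notMem hnotmem]
      push_cast
      have : ((V'.image (K x s)).card : ℝ) + 1 - 1 = ((V'.image (K x s)).card : ℝ) - 1 + 1 := by
        ring
      rw [this]
      nlinarith [IH, hap, hpq, htri]


/-- multiscale budget of a set -/
noncomputable def Bud (σ : ℕ → ℝ) (l : ℕ) (S : Finset (Fin n)) : ℝ :=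
  ∑ j ∈ Finset.range l, ((nc x (σ j) S : ℝ) - (nc x (σ (j+1)) S : ℝ)) * σ (j+1)

lemma Bud_nonneg (σ : ℕ → ℝ) (N l : ℕ) (hlN : l ≤ N)
    (hnn : ∀ m, m ≤ N → 0 ≤ σ m) (hmono : ∀ m, m < N → σ m ≤ σ (m+1))
    (S : Finset (Fin n)) : 0 ≤ Bud x σ l S := by
  apply Finset.sum_nonneg
  intro j hj
  rw [Finset.mem_range] at hj
  have h1 : σ j ≤ σ (j+1) := hmono j (by omega)
  have h2 : (nc x (σ (j+1)) S : ℝ) ≤ (nc x (σ j) S : ℝ) := by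
    exact_mod_cast nc_anti x h1 S
  have h3 : 0 ≤ σ (j+1) := hnn (j+1) (by omega)
  nlinarith

lemma distBound (σ : ℕ → ℝ) (N : ℕ)
    (hnn : ∀ m, m ≤ N → 0 ≤ σ m) (hmono : ∀ m, m < N → σ m ≤ σ (m+1))
    (h0 : σ 0 = 0) :
    ∀ l, l ≤ N → ∀ a b, E x (σ l) a b →
      dist (x a) (x b) ≤ Bud x σ l (K x (σ l) a) := by
  have hmono' : ∀ i j, i ≤ j → j ≤ N → σ i ≤ σ j := by
    intro i j hij hjN
    induction hij with
    | refl => exact le_refl _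
    | @step k hk ih =>
      exact le_trans (ih (by omega)) (hmono k (by omega))
  intro l
  induction l with
  | zero =>
    intro _ a b hab
    have hxab : x a = x b := by
      induction hab with
      | refl => rfl
      | @tail c d hac hcd ih =>
        rw [h0] at hcd
        exact ih.trans (by rwa [← dist_le_zero])
    simp [Bud, hxab]
  | succ l ihl =>
    intro hlN a b hab
    have hlN' : l ≤ N := by omega
    have hsl : σ l ≤ σ (l+1) := hmono l (by omega)
    set V := K x (σ (l+1)) a with hVdef
    have hVsat : ∀ u ∈ V, K x (σ l) u ⊆ V := by
      intro u hu v hv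
      rw [mem_K] at hu hv ⊢
      exact E_trans x hu (E_mono x hsl hv)
    have hchain : Ch x V (σ (l+1)) a b := E_to_chain x hab
    have hcb := chainBound x (σ l) (σ (l+1)) (hnn (l+1) hlN)
      (Bud x σ l) (fun C => Bud_nonneg x σ N l hlN' hnn hmono C)
      (fun u v huv => ihl hlN' u v huv) V hVsat a b (self_mem_K x _ a) hchain
    -- identify the sum of budgets
    have hsum : ∑ C ∈ V.image (K x (σ l)), Bud x σ l C = Bud x σ l V := by
      simp only [Bud]
      rw [Finset.sum_comm]
      apply Finset.sum_congr rfl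
      intro j hj
      rw [Finset.mem_range] at hj
      have hj1 : σ j ≤ σ l := hmono' j l (by omega) hlN'
      have hj2 : σ (j+1) ≤ σ l := hmono' (j+1) l (by omega) hlN'
      rw [← Finset.sum_mul, Finset.sum_sub_distrib]
      rw [← Nat.cast_sum, ← Nat.cast_sum, sum_nc x hj1 hVsat, sum_nc x hj2 hVsat]
    have hcard : (V.image (K x (σ l))).card = nc x (σ l) V := rfl
    have hone : V.image (K x (σ (l+1))) = {V} := by
      apply Finset.eq_singleton_iff_nonempty_unique_mem.2
      constructor
      · exact ⟨K x (σ (l+1)) a, Finset.mem_image_of_mem _ (self_mem_K x _ a)⟩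
      · intro C hC
        obtain ⟨v, hv, rfl⟩ := Finset.mem_image.1 hC
        exact (K_eq_of x ((mem_K x).1 hv)).symm
    have hnc1 : nc x (σ (l+1)) V = 1 := by rw [nc, hone]; rfl
    have hBsucc : Bud x σ (l+1) V = Bud x σ l V +
        ((nc x (σ l) V : ℝ) - (nc x (σ (l+1)) V : ℝ)) * σ (l+1) := by
      rw [Bud, Finset.sum_range_succ]; rfl
    rw [hBsucc, hnc1]
    rw [hsum, hcard] at hcb
    push_cast
    convert hcb using 2

lemma pow3_ge (k : ℕ) : k < 3 ^ k := Nat.lt_pow_self (by norm_num)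

/-- the 3-adic pigeonhole: some scale is both merge-free and has small accumulated budget -/
lemma pigeon (h : ℕ) (c : ℕ → ℕ) (hmono : ∀ j, j ≤ h → c (j+1) ≤ c j)
    (hc0 : c 0 ≤ h) (hch : 1 ≤ c (h+1)) :
    ∃ l, l ≤ h ∧ c l = c (l+1) ∧
      (∑ j ∈ Finset.range l, (c j - c (j+1)) * 3^j) ≤ 3^l := by
  by_contra hcon
  push_neg at hcon
  have key : ∀ l, l ≤ h →
      (l + 1 ≤ ∑ j ∈ Finset.range (l+1), (c j - c (j+1))) ∧
      (∀ k, 1 ≤ k → 3^(l+k) < ∑ j ∈ Finset.range (l+1), (c j - c (j+1)) * 3^j →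
        l+1+k ≤ ∑ j ∈ Finset.range (l+1), (c j - c (j+1))) := by
    intro l
    induction l with
    | zero =>
      intro h0
      simp only [Nat.zero_add]
      have hc1 : c (0+1) ≤ c 0 := hmono 0 h0
      have hne : c 0 ≠ c (0+1) := by
        intro hceq
        have h2 := hcon 0 h0 hceq
        rw [Finset.sum_range_zero, pow_zero] at h2
        omega
      constructor
      · rw [Finset.sum_range_one]
        omega
      · intro k hk hA
        rw [Finset.sum_range_one] at hA ⊢
        rw [pow_zero, mul_one] at hA
        have := pow3_ge k
        omega
    | succ l ih =>
      intro hl1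
      have hlh : l ≤ h := by omega
      obtain ⟨ih1, ih2⟩ := ih hlh
      have hmerge : c (l+1+1) ≤ c (l+1) := hmono (l+1) hl1
      rcases Nat.eq_zero_or_pos (c (l+1) - c (l+1+1)) with ht0 | ht1
      · -- no merge at level l+1: the accumulated budget must be heavy
        have hceq : c (l+1) = c (l+1+1) := by omega
        have hheavy : 3^(l+1) < ∑ j ∈ Finset.range (l+1), (c j - c (j+1)) * 3^j :=
          hcon (l+1) hl1 hceq
        have hN : l + 2 ≤ ∑ j ∈ Finset.range (l+1), (c j - c (j+1)) :=
          ih2 1 le_rfl (by simpa using hheavy)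
        constructor
        · rw [Finset.sum_range_succ]
          omega
        · intro k hk hA
          rw [Finset.sum_range_succ] at hA ⊢
          rw [ht0] at hA ⊢
          simp only [zero_mul, add_zero] at hA ⊢
          have := ih2 (k+1) (by omega) (by
            have heq : l + (k+1) = l + 1 + k := by omega
            rw [heq]; exact hA)
          omega
      · -- a merge happened at level l+1
        constructor
        · rw [Finset.sum_range_succ]
          omega
        · intro k hk hA
          rw [Finset.sum_range_succ] at hA ⊢
          set A := ∑ j ∈ Finset.range (l+1), (c j - c (j+1)) * 3^j with hAdef
          set T := ∑ j ∈ Finset.range (l+1), (c j - c (j+1)) with hTdef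
          have hex : ∃ j', A ≤ 3^(l+1+j') := ⟨A, by
            calc A ≤ 3^A := le_of_lt (pow3_ge A)
              _ ≤ 3^(l+1+A) := Nat.pow_le_pow_right (by norm_num) (by omega)⟩
          set j := Nat.find hex with hjdef
          have hj : A ≤ 3^(l+1+j) := Nat.find_spec hex
          have hMl : l+1+j ≤ T := by
            rcases Nat.eq_zero_or_pos j with hj0 | hj1
            · rw [hj0, Nat.add_zero]
              exact ih1
            · have hmin := Nat.find_min hex (m := j-1) (by omega)
              push_neg at hmin
              have heq : l+1+(j-1) = l+j := by omega
              rw [heq] at hmin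
              have := ih2 j (by omega) hmin
              omega
          by_cases hkj : k ≤ j
          · omega
          · have hjk : j < k := by omega
            have e1 : (3:ℕ)^(l+1+k) = 3^(l+1) * 3^k := pow_add 3 (l+1) k
            have e2 : (3:ℕ)^(l+1+j) = 3^(l+1) * 3^j := pow_add 3 (l+1) j
            have e3 : (3:ℕ)^(l+1) * (3^j + (c (l+1) - c (l+1+1))) =
                3^(l+1) * 3^j + (c (l+1) - c (l+1+1)) * 3^(l+1) := by ring
            have h1 : (3:ℕ)^(l+1) * 3^k < 3^(l+1) * (3^j + (c (l+1) - c (l+1+1))) := by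
              omega
            have h4 : (3:ℕ)^k < 3^j + (c (l+1) - c (l+1+1)) :=
              Nat.lt_of_mul_lt_mul_left h1
            have h5 : (3:ℕ)^j + k ≤ 3^k + j := by
              have hja : (3:ℕ)^j ≤ 3^(k-1) := Nat.pow_le_pow_right (by norm_num) (by omega)
              have hkb : k - 1 < 3^(k-1) := pow3_ge (k-1)
              have hkc : (3:ℕ)^k = 3 * 3^(k-1) := by
                conv_lhs => rw [show k = (k-1)+1 by omega]
                rw [pow_succ]
                ring
              omega
            omega
  obtain ⟨kN, -⟩ := key h le_rfl
  have tele : ∀ m, m ≤ h+1 → (∑ j ∈ Finset.range m, (c j - c (j+1))) + c m ≤ c 0 := by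
    intro m
    induction m with
    | zero => intro _; simp
    | succ m ih =>
      intro hm
      have h1 := ih (by omega)
      have h2 : c (m+1) ≤ c m := hmono m (by omega)
      rw [Finset.sum_range_succ]
      omega
  have := tele (h+1) le_rfl
  omega

end BGCover


open BGCover Finset

/-- Björklund–Gorodnik covering lemma: every configuration `x ∈ X^h` is either entirely
`β_{h+1}`-clustered, or belongs to some `Δ_Q(α_l, β_{l+1})` for a partition `Q` of
`{1,…,h}` with at least two blocks. -/
theorem covering_lemma
    {X : Type*} [MetricSpace X] (h : ℕ) (hh : 1 ≤ h)
    (α β : ℕ → ℝ)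
    (hα0 : α 0 = 0)
    (hβ1 : 0 < β 1)
    (hαβ : ∀ l, 1 ≤ l → l ≤ h → α l = 3 * β l)
    (hchain : ∀ l, l ≤ h → α l < β (l + 1))
    (x : Fin h → X) :
    (∀ i j, dist (x i) (x j) ≤ β (h + 1)) ∨
    ∃ l ≤ h, ∃ Q : Finpartition (Finset.univ : Finset (Fin h)),
      2 ≤ Q.parts.card ∧
      (∀ I ∈ Q.parts, ∀ i ∈ I, ∀ j ∈ I, dist (x i) (x j) ≤ α l) ∧
      (∀ I ∈ Q.parts, ∀ I' ∈ Q.parts, I ≠ I' →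
        ∀ i ∈ I, ∀ j ∈ I', β (l + 1) < dist (x i) (x j)) := by
  classical
  set σ : ℕ → ℝ := fun j => if j = 0 then 0 else β j with hσdef
  have hσ0 : σ 0 = 0 := by simp [hσdef]
  have hσ1 : ∀ m, 1 ≤ m → σ m = β m := by
    intro m hm
    simp [hσdef, Nat.pos_iff_ne_zero.1 hm]
  have hσs : ∀ m, m ≤ h → 3 * σ m < σ (m+1) := by
    intro m hm
    rcases Nat.eq_zero_or_pos m with rfl | hm1
    · rw [hσ0, hσ1 1 le_rfl]; linarith
    · rw [hσ1 m hm1, hσ1 (m+1) (by omega)]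
      have h2 := hchain m hm
      rw [hαβ m hm1 hm] at h2
      exact h2
  have hσnn : ∀ m, m ≤ h+1 → 0 ≤ σ m := by
    intro m
    induction m with
    | zero => intro _; rw [hσ0]
    | succ m ih =>
      intro hm
      have h1 := hσs m (by omega)
      have h2 := ih (by omega)
      linarith
  have hσmono : ∀ m, m < h+1 → σ m ≤ σ (m+1) := by
    intro m hm
    have h1 := hσs m (by omega)
    have h2 := hσnn m (by omega)
    linarith
  have hσle : ∀ i j, i ≤ j → j ≤ h+1 → σ i ≤ σ j := by
    intro i j hij
    induction hij with
    | refl => intro _; exact le_refl _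
    | @step k hk ih =>
      intro hj
      exact le_trans (ih (by omega)) (hσmono k (by omega))
  have hpow3 : ∀ i m, i + m ≤ h + 1 → 3^m * σ i ≤ σ (i+m) := by
    intro i m
    induction m with
    | zero => intro _; simp
    | succ m ih =>
      intro him
      have h1 := ih (by omega)
      have h2 := hσs (i+m) (by omega)
      show (3:ℝ)^(m+1) * σ i ≤ σ (i+m+1)
      calc (3:ℝ)^(m+1) * σ i = 3 * (3^m * σ i) := by ring
        _ ≤ 3 * σ (i+m) := by linarith
        _ ≤ σ (i+m+1) := le_of_lt h2
  -- class counts and the pigeonhole choice of the scale l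
  set c : ℕ → ℕ := fun j => nc x (σ j) Finset.univ with hcdef
  have hcmono : ∀ j, j ≤ h → c (j+1) ≤ c j := fun j hj =>
    nc_anti x (hσmono j (by omega)) Finset.univ
  have hc0 : c 0 ≤ h := le_trans Finset.card_image_le (by simp)
  have hneU : (Finset.univ : Finset (Fin h)).Nonempty := ⟨⟨0, hh⟩, Finset.mem_univ _⟩
  have hch1 : 1 ≤ c (h+1) := Finset.card_pos.2 (hneU.image _)
  obtain ⟨l, hlh, hceq, hsum3⟩ := pigeon h c hcmono hc0 hch1
  -- at the chosen scale the two class structures agree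
  have hEE : ∀ i j : Fin h, E x (σ (l+1)) i j → E x (σ l) i j := by
    intro i j hij
    have hmle : σ l ≤ σ (l+1) := hσmono l (by omega)
    have hcards : ((Finset.univ.image (K x (σ l))).image
        (fun C => C.biUnion (K x (σ (l+1))))).card
        = (Finset.univ.image (K x (σ l))).card := by
      rw [← image_K_of_le x hmle Finset.univ]
      exact hceq.symm
    have hinj := Finset.injOn_of_card_image_eq hcards
    have h3 : (K x (σ l) i).biUnion (K x (σ (l+1)))
        = (K x (σ l) j).biUnion (K x (σ (l+1))) := by
      rw [biUnion_K x hmle i, biUnion_K x hmle j]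
      exact K_eq_of x hij
    have h4 := hinj (Finset.mem_coe.2 (Finset.mem_image_of_mem _ (Finset.mem_univ i)))
      (Finset.mem_coe.2 (Finset.mem_image_of_mem _ (Finset.mem_univ j))) h3
    have h5 : j ∈ K x (σ l) i := by rw [h4]; exact self_mem_K x _ j
    exact (mem_K x).1 h5
  have hα3 : α l = 3 * σ l := by
    rcases Nat.eq_zero_or_pos l with rfl | hl1
    · rw [hα0, hσ0]; ring
    · rw [hαβ l hl1 hlh, hσ1 l hl1]
  -- per-class budget is at most α l
  have hBudle : ∀ i : Fin h, Bud x σ l (K x (σ l) i) ≤ α l := by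
    intro i
    rw [hα3, Bud]
    have hterm : ∀ j ∈ Finset.range l,
        ((nc x (σ j) (K x (σ l) i) : ℝ) - (nc x (σ (j+1)) (K x (σ l) i) : ℝ)) * σ (j+1)
          ≤ ((c j : ℝ) - (c (j+1) : ℝ)) * σ (j+1) := by
      intro j hj
      rw [Finset.mem_range] at hj
      have hj1 : σ j ≤ σ l := hσle j l (by omega) (by omega)
      have hj2 : σ (j+1) ≤ σ l := hσle (j+1) l (by omega) (by omega)
      have hs1 := nc_split x hj1 i
      have hs2 := nc_split x hj2 i
      have hout : nc x (σ (j+1)) (Finset.univ \ K x (σ l) i)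
          ≤ nc x (σ j) (Finset.univ \ K x (σ l) i) :=
        nc_anti x (hσmono j (by omega)) _
      have hnat : nc x (σ j) (K x (σ l) i) + c (j+1)
          ≤ c j + nc x (σ (j+1)) (K x (σ l) i) := by
        have e1 : c j = nc x (σ j) (K x (σ l) i)
            + nc x (σ j) (Finset.univ \ K x (σ l) i) := hs1
        have e2 : c (j+1) = nc x (σ (j+1)) (K x (σ l) i)
            + nc x (σ (j+1)) (Finset.univ \ K x (σ l) i) := hs2
        omega
      have hreal : (nc x (σ j) (K x (σ l) i) : ℝ) - (nc x (σ (j+1)) (K x (σ l) i) : ℝ)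
          ≤ (c j : ℝ) - (c (j+1) : ℝ) := by
        have h' : (nc x (σ j) (K x (σ l) i) : ℝ) + (c (j+1) : ℝ)
            ≤ (c j : ℝ) + (nc x (σ (j+1)) (K x (σ l) i) : ℝ) := by exact_mod_cast hnat
        linarith
      have hnn : (0:ℝ) ≤ σ (j+1) := hσnn (j+1) (by omega)
      exact mul_le_mul_of_nonneg_right hreal hnn
    have hterm2 : ∀ j ∈ Finset.range l,
        ((c j : ℝ) - (c (j+1) : ℝ)) * σ (j+1)
          ≤ ((c j : ℝ) - (c (j+1) : ℝ)) * (3^(j+1) * σ l / 3^l) := by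
      intro j hj
      rw [Finset.mem_range] at hj
      have hw : (0:ℝ) ≤ (c j : ℝ) - (c (j+1) : ℝ) := by
        have := hcmono j (by omega)
        have : (c (j+1) : ℝ) ≤ (c j : ℝ) := by exact_mod_cast this
        linarith
      have harg : (j+1) + (l-j-1) = l := by omega
      have hp := hpow3 (j+1) (l-j-1) (by omega)
      rw [harg] at hp
      have hpowpos : (0:ℝ) < 3^(l-j-1) := by positivity
      have hsig : σ (j+1) ≤ 3^(j+1) * σ l / 3^l := by
        have hsplit : (3:ℝ)^l = 3^(j+1) * 3^(l-j-1) := by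
          rw [← pow_add, harg]
        rw [hsplit]
        rw [le_div_iff₀ (by positivity)]
        calc σ (j+1) * (3^(j+1) * 3^(l-j-1)) = 3^(j+1) * (3^(l-j-1) * σ (j+1)) := by ring
          _ ≤ 3^(j+1) * σ l := by
              have h31 : (0:ℝ) ≤ 3^(j+1) := by positivity
              nlinarith
      nlinarith
    have hsumr : (∑ j ∈ Finset.range l, ((c j : ℝ) - (c (j+1) : ℝ)) * 3^j) ≤ 3^l := by
      have hcast : ∀ j ∈ Finset.range l, ((c j : ℝ) - (c (j+1) : ℝ)) * 3^j
          = (((c j - c (j+1)) * 3^j : ℕ) : ℝ) := by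
        intro j hj
        rw [Finset.mem_range] at hj
        have := hcmono j (by omega)
        push_cast [Nat.cast_sub this]
        ring
      rw [Finset.sum_congr rfl hcast, ← Nat.cast_sum]
      exact_mod_cast hsum3
    calc (∑ j ∈ Finset.range l,
          ((nc x (σ j) (K x (σ l) i) : ℝ) - (nc x (σ (j+1)) (K x (σ l) i) : ℝ)) * σ (j+1))
        ≤ ∑ j ∈ Finset.range l, ((c j : ℝ) - (c (j+1) : ℝ)) * σ (j+1) :=
          Finset.sum_le_sum hterm
      _ ≤ ∑ j ∈ Finset.range l, ((c j : ℝ) - (c (j+1) : ℝ)) * (3^(j+1) * σ l / 3^l) :=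
          Finset.sum_le_sum hterm2
      _ = (3 * σ l / 3^l) * ∑ j ∈ Finset.range l, ((c j : ℝ) - (c (j+1) : ℝ)) * 3^j := by
          rw [Finset.mul_sum]
          apply Finset.sum_congr rfl
          intro j hj
          rw [pow_succ]
          ring
      _ ≤ 3 * σ l := by
          have hpos : (0:ℝ) < 3^l := by positivity
          have hnnl : (0:ℝ) ≤ σ l := hσnn l (by omega)
          have hfac : (0:ℝ) ≤ 3 * σ l / 3^l := by positivity
          calc (3 * σ l / 3^l) * ∑ j ∈ Finset.range l, ((c j : ℝ) - (c (j+1) : ℝ)) * 3^j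
              ≤ (3 * σ l / 3^l) * 3^l := by
                apply mul_le_mul_of_nonneg_left hsumr hfac
            _ = 3 * σ l := by field_simp
  have hA := distBound x σ (h+1) hσnn hσmono hσ0 l (by omega)
  have hrel : ∀ i j : Fin h, E x (σ (l+1)) i j → dist (x i) (x j) ≤ α l :=
    fun i j hij => le_trans (hA i j (hEE i j hij)) (hBudle i)
  by_cases hone : ∀ i j : Fin h, E x (σ (l+1)) i j
  · left
    intro i j
    have h1 := hrel i j (hone i j)
    have h2 : α l < σ (l+1) := by
      have := hσs l hlh
      rw [hα3]
      linarith
    have h3 : σ (l+1) ≤ σ (h+1) := hσle (l+1) (h+1) (by omega) le_rfl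
    have h4 : σ (h+1) = β (h+1) := hσ1 (h+1) (by omega)
    linarith
  · right
    refine ⟨l, hlh, ?_⟩
    have hpartsdisj : ((Finset.univ.image (K x (σ (l+1)))) :
        Set (Finset (Fin h))).PairwiseDisjoint id := by
      intro C hC C' hC' hne'
      simp only [Finset.coe_image, Set.mem_image] at hC hC'
      obtain ⟨a, -, rfl⟩ := hC
      obtain ⟨a', -, rfl⟩ := hC'
      simp only [Function.onFun, id]
      rw [Finset.disjoint_left]
      intro u hu hu'
      exact hne' (by rw [K_eq_of x ((mem_K x).1 hu), K_eq_of x ((mem_K x).1 hu')])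
    refine ⟨⟨Finset.univ.image (K x (σ (l+1))),
        Finset.supIndep_iff_pairwiseDisjoint.2 hpartsdisj, ?_, ?_⟩, ?_, ?_, ?_⟩
    · -- sup of parts is univ
      apply Finset.eq_univ_of_forall
      intro u
      rw [Finset.mem_sup]
      exact ⟨K x (σ (l+1)) u, Finset.mem_image_of_mem _ (Finset.mem_univ u),
        self_mem_K x _ u⟩
    · -- the empty set is not a part
      intro hmem
      obtain ⟨a, -, ha⟩ := Finset.mem_image.1 hmem
      have : a ∈ K x (σ (l+1)) a := self_mem_K x _ a
      rw [ha] at this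
      exact absurd this (Finset.notMem_empty a)
    · -- at least two parts
      by_contra hcard2
      push_neg at hcard2
      apply hone
      intro i j
      have hc1' : 1 ≤ (Finset.univ.image (K x (σ (l+1)))).card :=
        Finset.card_pos.2 (hneU.image _)
      have hcard2' : (Finset.univ.image (K x (σ (l+1)))).card < 2 := hcard2
      have hc1 : (Finset.univ.image (K x (σ (l+1)))).card = 1 := by omega
      obtain ⟨C, hC⟩ := Finset.card_eq_one.1 hc1
      have hi : K x (σ (l+1)) i = C := by
        have := Finset.mem_image_of_mem (K x (σ (l+1))) (Finset.mem_univ i)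
        rw [hC] at this
        exact Finset.mem_singleton.1 this
      have hjC : K x (σ (l+1)) j = C := by
        have := Finset.mem_image_of_mem (K x (σ (l+1))) (Finset.mem_univ j)
        rw [hC] at this
        exact Finset.mem_singleton.1 this
      have : j ∈ K x (σ (l+1)) i := by
        rw [hi, ← hjC]
        exact self_mem_K x _ j
      exact (mem_K x).1 this
    · -- intra-cluster bound
      intro I hI i hi j hj
      obtain ⟨a, -, rfl⟩ := Finset.mem_image.1 hI
      exact hrel i j (E_trans x (E_symm x ((mem_K x).1 hi)) ((mem_K x).1 hj))
    · -- inter-cluster separation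
      intro I hI I' hI' hne' i hi j hj
      obtain ⟨a, -, rfl⟩ := Finset.mem_image.1 hI
      obtain ⟨a', -, rfl⟩ := Finset.mem_image.1 hI'
      by_contra hle
      push_neg at hle
      have hstep : E x (σ (l+1)) i j :=
        Relation.ReflTransGen.single (by rw [hσ1 (l+1) (by omega)]; exact hle)
      apply hne'
      rw [K_eq_of x ((mem_K x).1 hi), K_eq_of x ((mem_K x).1 hj)]
      exact K_eq_of x hstep
end
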